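/- arXiv:1209.5926 — 8 statements merged into one kernel-verified Lean document; each statement's English description precedes it below -/
import Mathlib

section
/- Let M ≥ 1 and let F be an M×M Hermitian positive semidefinite complex matrix whose diagonal entries f_i := F_{i,i} satisfy f_1 ≥ f_2 ≥ … ≥ f_M ≥ 0, assumption (A1) with constant α > 0, and assumption (A2) with constants f_+ > 0 and γ > 1. Set ρ_+ := (1+α) f_+. Then for every x > 0, the number N(x;F) of eigenvalues of F (counted with multiplicity) strictly greater than x satisfies N(x;F) ≤ min(M, ρ_+^{1/γ} x^{−1/γ}). -/
open scoped ComplexOrder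
open Finset

-- Upper bound on the quadratic form for vectors vanishing on first m coordinates
lemma quad_upper {M : ℕ} (F : Matrix (Fin M) (Fin M) ℂ) (hH : F.IsHermitian)
    (v : Fin M → ℂ) (m : ℕ) (hmM : m < M)
    (hvz : ∀ j : Fin M, (j : ℕ) < m → v j = 0)
    (hmono : ∀ i j : Fin M, i ≤ j → (F j j).re ≤ (F i i).re) :
    ∑ j, ∑ i, ((starRingEnd ℂ) (v j) * (F j i * v i)).re
      ≤ ((F ⟨m, hmM⟩ ⟨m, hmM⟩).re
         + ∑ p ∈ Finset.univ.filter
             (fun p : Fin M × Fin M => (⟨m, hmM⟩ : Fin M) ≤ p.1 ∧ p.1 < p.2),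
             ‖F p.1 p.2‖)
        * (∑ i, Complex.normSq (v i)) := by
  classical
  set im : Fin M := ⟨m, hmM⟩ with him
  set t := ∑ i, Complex.normSq (v i) with ht
  have htnn : (0:ℝ) ≤ t := Finset.sum_nonneg fun i _ => Complex.normSq_nonneg _
  set g : Fin M × Fin M → ℝ :=
    fun p => ((starRingEnd ℂ) (v p.1) * (F p.1 p.2 * v p.2)).re with hg
  have hmain : ∑ j, ∑ i, ((starRingEnd ℂ) (v j) * (F j i * v i)).re
      = ∑ p ∈ (Finset.univ : Finset (Fin M × Fin M)), g p := by
    rw [← Finset.univ_product_univ, Finset.sum_product]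
  rw [hmain,
    ← Finset.sum_filter_add_sum_filter_not Finset.univ (fun p : Fin M × Fin M => p.1 = p.2) g]
  have hne : Finset.univ.filter (fun p : Fin M × Fin M => ¬ p.1 = p.2)
      = Finset.univ.filter (fun p : Fin M × Fin M => p.1 < p.2)
        ∪ Finset.univ.filter (fun p : Fin M × Fin M => p.2 < p.1) := by
    rw [← Finset.filter_or]
    exact Finset.filter_congr fun p _ => by
      simpa using ne_iff_lt_or_gt (a := p.1) (b := p.2)
  have hdisj : Disjoint (Finset.univ.filter (fun p : Fin M × Fin M => p.1 < p.2))
      (Finset.univ.filter (fun p : Fin M × Fin M => p.2 < p.1)) := by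
    refine Finset.disjoint_left.mpr fun p hp hp' => ?_
    simp only [Finset.mem_filter] at hp hp'
    exact absurd hp'.2 (lt_asymm hp.2)
  rw [hne, Finset.sum_union hdisj]
  have hswap : ∑ p ∈ Finset.univ.filter (fun p : Fin M × Fin M => p.2 < p.1), g p
      = ∑ p ∈ Finset.univ.filter (fun p : Fin M × Fin M => p.1 < p.2), g (p.2, p.1) := by
    refine Finset.sum_equiv (Equiv.prodComm (Fin M) (Fin M)) (fun p => by simp) ?_
    intro p _
    simp [g]
  rw [hswap]
  have hdiag : ∑ p ∈ Finset.univ.filter (fun p : Fin M × Fin M => p.1 = p.2), g p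
      ≤ (F im im).re * t := by
    have h1 : ∑ p ∈ Finset.univ.filter (fun p : Fin M × Fin M => p.1 = p.2), g p
        = ∑ i : Fin M, g (i, i) := by
      rw [Finset.sum_filter, ← Finset.univ_product_univ, Finset.sum_product]
      simp
    rw [h1, ht, Finset.mul_sum]
    refine Finset.sum_le_sum fun i _ => ?_
    have hgd : g (i, i) = (F i i).re * Complex.normSq (v i) := by
      have h2 : (starRingEnd ℂ) (v i) * (F i i * v i)
          = F i i * ((v i) * (starRingEnd ℂ) (v i)) := by ring
      simp only [hg, h2, Complex.mul_conj]
      simp [Complex.mul_re]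
    rw [hgd]
    by_cases hi : (i : ℕ) < m
    · rw [hvz i hi]; simp
    · exact mul_le_mul_of_nonneg_right
        (hmono im i (by simpa [him, Fin.le_def] using Nat.le_of_not_lt hi))
        (Complex.normSq_nonneg _)
  have hoff : (∑ p ∈ Finset.univ.filter (fun p : Fin M × Fin M => p.1 < p.2), g p)
      + ∑ p ∈ Finset.univ.filter (fun p : Fin M × Fin M => p.1 < p.2), g (p.2, p.1)
      ≤ (∑ p ∈ Finset.univ.filter
          (fun p : Fin M × Fin M => im ≤ p.1 ∧ p.1 < p.2),
          ‖F p.1 p.2‖) * t := by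
    rw [← Finset.sum_add_distrib]
    have hfil : Finset.univ.filter (fun p : Fin M × Fin M => im ≤ p.1 ∧ p.1 < p.2)
        = (Finset.univ.filter (fun p : Fin M × Fin M => p.1 < p.2)).filter
            (fun p => im ≤ p.1) := by
      rw [Finset.filter_filter]
      exact Finset.filter_congr fun p _ => and_comm
    rw [hfil]
    calc ∑ p ∈ Finset.univ.filter (fun p : Fin M × Fin M => p.1 < p.2), (g p + g (p.2, p.1))
        ≤ ∑ p ∈ Finset.univ.filter (fun p : Fin M × Fin M => p.1 < p.2),
            (if im ≤ p.1 then ‖F p.1 p.2‖ * t else 0) := by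
          refine Finset.sum_le_sum fun p hp => ?_
          have hplt : p.1 < p.2 := by
            simpa using (Finset.mem_filter.mp hp).2
          by_cases hpm : im ≤ p.1
          · rw [if_pos hpm]
            have habs : ∀ (a b c : ℂ),
                ((starRingEnd ℂ) a * (c * b)).re
                  ≤ ‖c‖ * (‖a‖ * ‖b‖) := by
              intro a b c
              refine le_trans (Complex.re_le_norm _) (le_of_eq ?_)
              rw [norm_mul, norm_mul, Complex.norm_conj]
              ring
            have hFsymm : ‖F p.2 p.1‖ = ‖F p.1 p.2‖ := by
              rw [← hH.apply p.1 p.2]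
              exact (Complex.norm_conj _).symm
            have h1 : g p ≤ ‖F p.1 p.2‖
                * (‖v p.1‖ * ‖v p.2‖) := habs _ _ _
            have h2 : g (p.2, p.1) ≤ ‖F p.1 p.2‖
                * (‖v p.2‖ * ‖v p.1‖) := by
              refine le_trans (habs (v p.2) (v p.1) (F p.2 p.1)) (le_of_eq ?_)
              rw [hFsymm]
            have hamgm : 2 * (‖v p.1‖ * ‖v p.2‖)
                ≤ Complex.normSq (v p.1) + Complex.normSq (v p.2) := by
              have := two_mul_le_add_sq (‖v p.1‖) (‖v p.2‖)
              rwa [Complex.sq_norm, Complex.sq_norm, mul_assoc] at this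
            have hpairle : Complex.normSq (v p.1) + Complex.normSq (v p.2) ≤ t := by
              rw [ht]
              have hsub := Finset.sum_le_sum_of_subset_of_nonneg
                (Finset.subset_univ {p.1, p.2})
                (fun i _ _ => Complex.normSq_nonneg (v i))
              rwa [Finset.sum_pair (ne_of_lt hplt)] at hsub
            have hFnn : (0:ℝ) ≤ ‖F p.1 p.2‖ := norm_nonneg _
            nlinarith [h1, h2, hamgm, hpairle, hFnn]
          · rw [if_neg hpm]
            have hz : v p.1 = 0 := by
              refine hvz p.1 ?_
              have := (not_le.mp hpm)
              simpa [him, Fin.lt_def] using this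
            simp [hg, hz]
      _ = ∑ p ∈ (Finset.univ.filter (fun p : Fin M × Fin M => p.1 < p.2)).filter
            (fun p => im ≤ p.1), ‖F p.1 p.2‖ * t := (Finset.sum_filter _ _).symm
      _ = (∑ p ∈ (Finset.univ.filter (fun p : Fin M × Fin M => p.1 < p.2)).filter
            (fun p => im ≤ p.1), ‖F p.1 p.2‖) * t := by rw [Finset.sum_mul]
  calc ∑ p ∈ Finset.univ.filter (fun p : Fin M × Fin M => p.1 = p.2), g p
        + ((∑ p ∈ Finset.univ.filter (fun p : Fin M × Fin M => p.1 < p.2), g p)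
          + ∑ p ∈ Finset.univ.filter (fun p : Fin M × Fin M => p.1 < p.2), g (p.2, p.1))
      ≤ (F im im).re * t
        + (∑ p ∈ Finset.univ.filter
            (fun p : Fin M × Fin M => im ≤ p.1 ∧ p.1 < p.2),
            ‖F p.1 p.2‖) * t := add_le_add hdiag hoff
    _ = ((F im im).re
         + ∑ p ∈ Finset.univ.filter
             (fun p : Fin M × Fin M => im ≤ p.1 ∧ p.1 < p.2),
             ‖F p.1 p.2‖) * t := by ring

/-- Under (A1)-(A2) with decreasing nonnegative diagonal, the eigenvalue
counting function of the Hermitian PSD matrix `F` satisfies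
`N(x;F) ≤ min (M, ρ₊^{1/γ} x^{-1/γ})` for all `x > 0`, where `ρ₊ = (1+α) f₊`. -/
theorem capacity_counting_bound {M : ℕ} (hM : 1 ≤ M)
    (F : Matrix (Fin M) (Fin M) ℂ) (hF : F.PosSemidef)
    (α fplus γ : ℝ) (hα : 0 < α) (hfplus : 0 < fplus) (hγ : 1 < γ)
    (hmono : ∀ i j : Fin M, i ≤ j → (F j j).re ≤ (F i i).re)
    (hnonneg : ∀ i : Fin M, 0 ≤ (F i i).re)
    (hA1 : ∀ i : Fin M,
      ∑ p ∈ Finset.univ.filter (fun p : Fin M × Fin M => i ≤ p.1 ∧ p.1 < p.2),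
        ‖F p.1 p.2‖ ≤ α * (F i i).re)
    (hA2 : ∀ i : Fin M, (F i i).re ≤ fplus * ((i : ℝ) + 1) ^ (-γ))
    (x : ℝ) (hx : 0 < x) :
    (((Finset.univ.filter (fun i => x < hF.1.eigenvalues i)).card : ℝ))
      ≤ min (M : ℝ) (((1 + α) * fplus) ^ (1/γ) * x ^ (-1/γ)) := by
  classical
  set P : Finset (Fin M) := Finset.univ.filter (fun i => x < hF.1.eigenvalues i) with hP
  set n : ℕ := P.card with hn
  have hnM : n ≤ M := le_trans (Finset.card_filter_le _ _) (by simp)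
  refine le_min (by exact_mod_cast hnM) ?_
  have hρ : (0:ℝ) < (1 + α) * fplus := by positivity
  rcases Nat.eq_zero_or_pos n with h0 | hnpos
  · rw [h0]; push_cast; positivity
  have key : x ≤ ((1 + α) * fplus) * (n : ℝ) ^ (-γ) := by
    obtain ⟨m, hmn⟩ : ∃ m, n = m + 1 := ⟨n - 1, (Nat.succ_pred_eq_of_pos hnpos).symm⟩
    have hmM : m < M := by omega
    set im : Fin M := ⟨m, hmM⟩ with him
    set u := hF.1.eigenvectorBasis with hu
    set μ := hF.1.eigenvalues with hμ
    -- the span of eigenvectors with eigenvalue > x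
    set S : Submodule ℂ (EuclideanSpace ℂ (Fin M)) :=
      Submodule.span ℂ (Set.range (fun i : {i // i ∈ P} => (u i : EuclideanSpace ℂ (Fin M)))) with hS
    have hfr : Module.finrank ℂ S = n := by
      have h := finrank_span_eq_card
        ((u.orthonormal.comp ((↑) : {i // i ∈ P} → Fin M)
          Subtype.val_injective).linearIndependent)
      rw [Fintype.card_coe] at h
      exact h
    -- find a nonzero vector in S vanishing on the first m coordinates
    let φ : S →ₗ[ℂ] (Fin m → ℂ) :=
      (LinearMap.pi fun j : Fin m =>
        ((LinearMap.proj (Fin.castLE hmM.le j)).comp (WithLp.linearEquiv 2 ℂ (Fin M → ℂ)).toLinearMap : (EuclideanSpace ℂ (Fin M)) →ₗ[ℂ] ℂ)).comp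
        S.subtype
    obtain ⟨w, hw0, hwne⟩ : ∃ w : S, φ w = 0 ∧ w ≠ 0 := by
      by_contra h
      push_neg at h
      have hinj : Function.Injective φ :=
        LinearMap.ker_eq_bot.mp (LinearMap.ker_eq_bot'.mpr h)
      have hle := LinearMap.finrank_le_finrank_of_injective hinj
      rw [hfr] at hle
      simp [Module.finrank_pi] at hle
      omega
    set v : EuclideanSpace ℂ (Fin M) := (w : EuclideanSpace ℂ (Fin M)) with hv
    have hvS : v ∈ S := w.2
    have hvne : v ≠ 0 := by
      simpa [hv, Submodule.coe_eq_zero] using hwne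
    have hvz : ∀ j : Fin M, (j : ℕ) < m → v j = 0 := by
      intro j hj
      have := congrFun hw0 ⟨j.1, hj⟩
      simpa [φ, show Fin.castLE hmM.le ⟨j.1, hj⟩ = j from Fin.ext rfl] using this
    -- coefficients
    have hc0 : ∀ i, i ∉ P → u.repr v i = 0 := by
      intro i hi
      rw [u.repr_apply_apply]
      have hvmem : v ∈ (ℂ ∙ (u i : EuclideanSpace ℂ (Fin M)))ᗮ := by
        refine Submodule.span_le.mpr ?_ hvS
        rintro _ ⟨j, rfl⟩
        rw [SetLike.mem_coe, Submodule.mem_orthogonal_singleton_iff_inner_right]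
        exact u.orthonormal.2 (fun h => hi (h ▸ j.2))
      exact Submodule.mem_orthogonal_singleton_iff_inner_right.mp hvmem
    set t : ℝ := ∑ i, Complex.normSq (v i) with ht
    have htpos : 0 < t := by
      obtain ⟨i, hi⟩ : ∃ i, v i ≠ 0 := by
        by_contra hcon
        push_neg at hcon
        exact hvne (by ext i; exact hcon i)
      refine Finset.sum_pos' (fun i _ => Complex.normSq_nonneg _) ⟨i, Finset.mem_univ i, ?_⟩
      simpa [Complex.normSq_pos] using hi
    -- the quadratic form
    set Q : ℝ := (inner ℂ v (WithLp.toLp 2 (F.mulVec v) : EuclideanSpace ℂ (Fin M)) : ℂ).re with hQ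
    have hQsum : Q = ∑ j, ∑ i, ((starRingEnd ℂ) (v j) * (F j i * v i)).re := by
      rw [hQ, PiLp.inner_apply, Complex.re_sum]
      refine Finset.sum_congr rfl fun j _ => ?_
      simp only [RCLike.inner_apply, Matrix.mulVec, dotProduct,
        Finset.mul_sum, Complex.re_sum]
      rw [Finset.sum_mul, Complex.re_sum]
      exact Finset.sum_congr rfl fun i _ => by rw [mul_comm]
    have hFv : (WithLp.toLp 2 (F.mulVec v) : EuclideanSpace ℂ (Fin M))
        = ∑ i, (u.repr v i * (μ i : ℂ)) • (u i : EuclideanSpace ℂ (Fin M)) := by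
      have h1 : v = ∑ i, u.repr v i • (u i : EuclideanSpace ℂ (Fin M)) := (u.sum_repr v).symm
      calc (WithLp.toLp 2 (F.mulVec v) : EuclideanSpace ℂ (Fin M)) = Matrix.toEuclideanLin F v := rfl
        _ = Matrix.toEuclideanLin F (∑ i, u.repr v i • (u i : EuclideanSpace ℂ (Fin M))) := by rw [← h1]
        _ = ∑ i, u.repr v i • Matrix.toEuclideanLin F (u i) := by
            rw [map_sum]
            exact Finset.sum_congr rfl fun i _ => map_smul _ _ _
        _ = ∑ i, (u.repr v i * (μ i : ℂ)) • (u i : EuclideanSpace ℂ (Fin M)) := by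
            refine Finset.sum_congr rfl fun i _ => ?_
            have h2 : Matrix.toEuclideanLin F (u i)
                = (μ i : ℂ) • (u i : EuclideanSpace ℂ (Fin M)) := by
              have h3 : F.mulVec (u i : Fin M → ℂ)
                  = μ i • (u i : Fin M → ℂ) :=
                hF.1.mulVec_eigenvectorBasis i
              ext k
              rw [show (Matrix.toEuclideanLin F (u i)) k = (F.mulVec ⇑(u i)) k from rfl, h3]
              show μ i • (u i) k = (μ i : ℂ) • (u i) k
              rw [Complex.real_smul, smul_eq_mul]
            rw [h2, smul_smul]
    have hQeig : Q = ∑ i, μ i * Complex.normSq (u.repr v i) := by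
      rw [hQ, hFv, inner_sum, Complex.re_sum]
      refine Finset.sum_congr rfl fun i _ => ?_
      rw [inner_smul_right]
      rw [show (inner ℂ v (u i : EuclideanSpace ℂ (Fin M)) : ℂ)
          = (starRingEnd ℂ) (u.repr v i) by
        rw [u.repr_apply_apply]
        exact (inner_conj_symm v _).symm]
      rw [mul_comm (u.repr v i) ((μ i : ℂ)), mul_assoc, Complex.mul_conj]
      simp [Complex.mul_re]
    have norm_sq_eq : ∀ w : EuclideanSpace ℂ (Fin M),
        ‖w‖ ^ 2 = ∑ i, Complex.normSq (w i) := by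
      intro w
      rw [EuclideanSpace.norm_eq, Real.sq_sqrt (Finset.sum_nonneg fun i _ => sq_nonneg _)]
      refine Finset.sum_congr rfl fun i _ => ?_
      rw [Complex.sq_norm]
    have hteig : t = ∑ i, Complex.normSq (u.repr v i) := by
      rw [ht, ← norm_sq_eq v, ← norm_sq_eq (u.repr v), u.repr.norm_map]
    have hlow : x * t ≤ Q := by
      rw [hQeig, hteig, Finset.mul_sum]
      rw [← Finset.sum_filter_add_sum_filter_not Finset.univ (fun i => i ∈ P)]
      rw [← Finset.sum_filter_add_sum_filter_not Finset.univ (fun i => i ∈ P)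
        (fun i => μ i * Complex.normSq (u.repr v i))]
      have h2 : ∀ i ∈ Finset.univ.filter (fun i => i ∉ P),
          μ i * Complex.normSq (u.repr v i) = 0 := by
        intro i hi
        rw [hc0 i (Finset.mem_filter.mp hi).2]; simp
      have h2' : ∀ i ∈ Finset.univ.filter (fun i => i ∉ P),
          x * Complex.normSq (u.repr v i) = 0 := by
        intro i hi
        rw [hc0 i (Finset.mem_filter.mp hi).2]; simp
      rw [Finset.sum_eq_zero h2, Finset.sum_eq_zero h2', add_zero, add_zero]
      refine Finset.sum_le_sum (fun i hi => ?_)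
      have hxi : x < μ i := by
        have := Finset.mem_filter.mp hi
        simpa [hP] using this.2
      exact mul_le_mul_of_nonneg_right hxi.le (Complex.normSq_nonneg _)
    have hup : Q ≤ (1 + α) * (F im im).re * t := by
      rw [hQsum]
      refine le_trans (quad_upper F hF.1 v m hmM hvz hmono) ?_
      have := hA1 im
      nlinarith [htpos.le]
    have hxle : x ≤ (1 + α) * (F im im).re := by
      have := hlow.trans hup
      have h1 : x * t ≤ ((1 + α) * (F im im).re) * t := this
      exact le_of_mul_le_mul_right (by linarith) htpos
    have hf : (F im im).re ≤ fplus * ((n : ℝ)) ^ (-γ) := by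
      have := hA2 im
      have him' : ((im : Fin M) : ℝ) + 1 = (n : ℝ) := by
        simp only [him, hmn]; push_cast; ring
      rwa [him'] at this
    calc x ≤ (1 + α) * (F im im).re := hxle
      _ ≤ (1 + α) * (fplus * (n : ℝ) ^ (-γ)) := by
          refine mul_le_mul_of_nonneg_left hf (by linarith)
      _ = ((1 + α) * fplus) * (n : ℝ) ^ (-γ) := by ring
  -- conclude from key
  have hn0 : (0:ℝ) < (n : ℝ) := by exact_mod_cast hnpos
  have h1 : (n : ℝ) ^ γ ≤ ((1 + α) * fplus) / x := by
    rw [le_div_iff₀ hx]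
    rw [Real.rpow_neg hn0.le] at key
    have h2 : 0 < (n : ℝ) ^ γ := Real.rpow_pos_of_pos hn0 γ
    calc (n : ℝ) ^ γ * x ≤ (n : ℝ) ^ γ * (((1 + α) * fplus) * ((n : ℝ) ^ γ)⁻¹) :=
          mul_le_mul_of_nonneg_left key h2.le
      _ = (1 + α) * fplus := by field_simp
  have hγ0 : 0 < 1 / γ := by positivity
  have h2 : ((n : ℝ) ^ γ) ^ (1/γ) ≤ (((1 + α) * fplus) / x) ^ (1/γ) :=
    Real.rpow_le_rpow (Real.rpow_nonneg hn0.le γ) h1 hγ0.le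
  have h3 : ((n : ℝ) ^ γ) ^ (1/γ) = (n : ℝ) := by
    rw [← Real.rpow_mul hn0.le, mul_one_div, div_self (ne_of_gt (by linarith : (0:ℝ) < γ)),
      Real.rpow_one]
  have h4 : (((1 + α) * fplus) / x) ^ (1/γ) = ((1 + α) * fplus) ^ (1/γ) * x ^ (-1/γ) := by
    rw [Real.div_rpow hρ.le hx.le, neg_div, Real.rpow_neg hx.le, div_eq_mul_inv]
  rw [h3, h4] at h2
  exact h2
end

section
/- Let M ≥ 1 and let F be an M×M Hermitian positive semidefinite complex matrix whose diagonal entries f_i := F_{i,i} satisfy f_1 ≥ f_2 ≥ … ≥ f_M ≥ 0, assumption (A1) with constant α > 0, and assumption (A2) with constants f_+ > 0 and γ > 1. Set ρ_+ := (1+α) f_+ and let κ > 0. If λ_1, …, λ_M are the eigenvalues of F, then the capacity C_M := Σ_{i=1}^M log₂(1 + κ M λ_i) satisfies C_M ≤ ((κ ρ_+)^{1/γ} / ln 2) · M^{1/γ} · ( γ/(γ−1) + ln(1 + κ ρ_+ M) ). -/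
open scoped ComplexOrder

section Aux

lemma tangent_rpow {γ : ℝ} (hγ : 1 < γ) {a b : ℝ} (ha : 0 < a) (hab : a ≤ b) :
    (γ - 1) * (b - a) * b ^ (-γ) ≤ a ^ (1 - γ) - b ^ (1 - γ) := by
  have hb : 0 < b := lt_of_lt_of_le ha hab
  have hr : (0:ℝ) < b / a := by positivity
  have hlog : 1 - a / b ≤ Real.log (b / a) := by
    have h1 := Real.log_le_sub_one_of_pos (show (0:ℝ) < a / b by positivity)
    have h2 : Real.log (a / b) = - Real.log (b / a) := by
      rw [← Real.log_inv]; congr 1; rw [inv_div]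
    linarith
  have hexp : 1 + (γ - 1) * (1 - a / b) ≤ (b / a) ^ (γ - 1) := by
    rw [Real.rpow_def_of_pos hr]
    have h4 := Real.add_one_le_exp (Real.log (b / a) * (γ - 1))
    nlinarith [hlog, sub_pos.mpr hγ]
  have key : a ^ (1 - γ) = b ^ (1 - γ) * (b / a) ^ (γ - 1) := by
    rw [Real.div_rpow hb.le ha.le]
    rw [show b ^ (1-γ) * (b ^ (γ-1) / a ^ (γ-1)) = (b^(1-γ) * b^(γ-1)) / a^(γ-1) by ring,
      ← Real.rpow_add hb]
    norm_num
    rw [← Real.rpow_neg ha.le, neg_sub]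
  have hbb : b ^ (1 - γ) = b ^ (-γ) * b := by
    rw [show (1-γ) = -γ + 1 by ring, Real.rpow_add_one hb.ne']
  have hpos1 : 0 < b ^ (1 - γ) := Real.rpow_pos_of_pos hb _
  have step1 : b ^ (1-γ) * ((γ-1)*(1 - a/b)) ≤ a^(1-γ) - b^(1-γ) := by
    rw [key]; nlinarith [hpos1, hexp]
  have step2 : b^(1-γ)*((γ-1)*(1-a/b)) = (γ-1)*(b-a)*b^(-γ) := by
    rw [hbb]; field_simp
  linarith

lemma tail_rpow_sum {γ : ℝ} (hγ : 1 < γ) (N M : ℕ) :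
    (γ - 1) * ∑ m ∈ Finset.Ico (N + 1) (M + 1), (m : ℝ) ^ (-γ) ≤
      (γ - 1) * (((N:ℝ) + 1) ^ (-γ)) + ((N:ℝ) + 1) ^ (1 - γ) := by
  have hγ1 : (0:ℝ) < γ - 1 := by linarith
  have main : ∀ m : ℕ, N + 1 ≤ m →
      (γ - 1) * ∑ k ∈ Finset.Ico (N + 1) (m + 1), (k : ℝ) ^ (-γ) ≤
        (γ - 1) * (((N:ℝ) + 1) ^ (-γ)) + ((N:ℝ) + 1) ^ (1 - γ) - (m : ℝ) ^ (1 - γ) := by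
    intro m hm
    induction m, hm using Nat.le_induction with
    | base =>
      rw [Nat.Ico_succ_singleton, Finset.sum_singleton]
      push_cast
      linarith
    | succ m hm ih =>
      rw [Finset.sum_Ico_succ_top (by omega : N + 1 ≤ m + 1)]
      have hm0 : (0:ℝ) < (m:ℝ) := by
        have : 1 ≤ m := le_trans (Nat.le_add_left 1 N) hm
        exact_mod_cast Nat.lt_of_lt_of_le Nat.zero_lt_one this
      have ht := tangent_rpow hγ (a := (m:ℝ)) (b := (m:ℝ) + 1) hm0 (by linarith)
      push_cast
      push_cast at ih
      nlinarith [ht]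
  rcases le_or_gt (N + 1) M with h | h
  · have := main M h
    have hpos : (0:ℝ) ≤ (M:ℝ) ^ (1 - γ) := Real.rpow_nonneg (by positivity) _
    linarith
  · have : Finset.Ico (N + 1) (M + 1) = ∅ := Finset.Ico_eq_empty (by omega)
    rw [this, Finset.sum_empty, mul_zero]
    positivity

lemma card_filter_val_lt {M : ℕ} (K : ℕ) (hK : K ≤ M) :
    (Finset.univ.filter (fun i : Fin M => i.val < K)).card = K := by
  rw [Finset.card_filter]
  rw [Fin.sum_univ_eq_sum_range (fun i => if i < K then 1 else 0)]
  rw [← Finset.card_filter]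
  have : Finset.filter (fun i => i < K) (Finset.range M) = Finset.range K := by
    ext x
    simp only [Finset.mem_filter, Finset.mem_range]
    omega
  rw [this, Finset.card_range]

lemma sum_head_le_weighted {M K : ℕ} (hK : K ≤ M) (μ w : Fin M → ℝ) (hμ : Monotone μ)
    (hw0 : ∀ i, 0 ≤ w i) (hw1 : ∀ i, w i ≤ 1) (hsum : ∑ i, w i = K) :
    ∑ i ∈ Finset.univ.filter (fun i : Fin M => i.val < K), μ i ≤ ∑ i, μ i * w i := by
  rcases Nat.eq_zero_or_pos K with h0 | hKpos
  · subst h0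
    have hw : ∀ i ∈ Finset.univ, w i = 0 := by
      rw [← Finset.sum_eq_zero_iff_of_nonneg (fun i _ => hw0 i)]
      simpa using hsum
    simp only [Nat.not_lt_zero, Finset.filter_false, Finset.sum_empty]
    rw [Finset.sum_congr rfl (fun i hi => by rw [hw i hi, mul_zero])]
    simp
  · set B := Finset.univ.filter (fun i : Fin M => i.val < K) with hB
    set c := μ ⟨K - 1, by omega⟩ with hc
    have hcard : B.card = K := card_filter_val_lt K hK
    have hle : ∀ i ∈ B, μ i ≤ c := by
      intro i hi
      apply hμ
      simp only [hB, Finset.mem_filter] at hi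
      show i.val ≤ K - 1
      omega
    have hge : ∀ i ∈ Bᶜ, c ≤ μ i := by
      intro i hi
      apply hμ
      simp only [hB, Finset.mem_compl, Finset.mem_filter, Finset.mem_univ, true_and,
        not_lt] at hi
      show K - 1 ≤ i.val
      omega
    have hsplit : ∑ i ∈ B, w i + ∑ i ∈ Bᶜ, w i = K := by
      rw [Finset.sum_add_sum_compl]; exact hsum
    have step1 : ∑ i ∈ B, μ i ≤ ∑ i ∈ B, μ i * w i + c * ∑ i ∈ Bᶜ, w i := by
      have : ∀ i ∈ B, μ i ≤ μ i * w i + c * (1 - w i) := by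
        intro i hi
        nlinarith [hle i hi, hw0 i, hw1 i]
      calc ∑ i ∈ B, μ i ≤ ∑ i ∈ B, (μ i * w i + c * (1 - w i)) := Finset.sum_le_sum this
        _ = ∑ i ∈ B, μ i * w i + c * (B.card - ∑ i ∈ B, w i) := by
            rw [Finset.sum_add_distrib]
            congr 1
            simp only [mul_comm c, ← Finset.sum_mul, Finset.sum_sub_distrib,
              Finset.sum_const, nsmul_eq_mul, mul_one]
        _ = ∑ i ∈ B, μ i * w i + c * ∑ i ∈ Bᶜ, w i := by
            rw [hcard]
            congr 2
            linarith [hsplit]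
    have step2 : c * ∑ i ∈ Bᶜ, w i ≤ ∑ i ∈ Bᶜ, μ i * w i := by
      rw [Finset.mul_sum]
      exact Finset.sum_le_sum (fun i hi => mul_le_mul_of_nonneg_right (hge i hi) (hw0 i))
    have : ∑ i, μ i * w i = ∑ i ∈ B, μ i * w i + ∑ i ∈ Bᶜ, μ i * w i :=
      (Finset.sum_add_sum_compl B _).symm
    linarith

lemma key_numeric {γ α q s t S A B : ℝ} (hγ : 1 < γ) (hα : 0 < α)
    (hq : q * (1 + α) = s) (hq0 : 0 ≤ q) (ht0 : 0 < t) (hs0 : 0 < s)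
    (htγ : t ^ γ = s) (htN1 : t ≤ A) (hA1 : A = B + 1) (hBint : 1 ≤ t ∨ B = 0)
    (htail : (γ - 1) * S ≤ (γ - 1) * A ^ (-γ) + A ^ (1 - γ)) :
    q * S ≤ t + t / (γ - 1) := by
  have hγ1 : (0:ℝ) < γ - 1 := by linarith
  have hγ0 : (0:ℝ) < γ := by linarith
  have hA0 : 0 < A := by linarith
  rw [show t + t/(γ-1) = ((γ-1)*t + t)/(γ-1) by field_simp, le_div_iff₀ hγ1]
  rcases le_or_gt 1 t with ht1 | ht1
  · -- t ≥ 1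
    have hb1 : A ^ (-γ) ≤ t ^ (-γ) :=
      Real.rpow_le_rpow_of_nonpos ht0 htN1 (by linarith)
    have hb2 : A ^ (1-γ) ≤ t ^ (1-γ) :=
      Real.rpow_le_rpow_of_nonpos ht0 htN1 (by linarith)
    have e1 : t ^ (-γ) * s = 1 := by
      rw [← htγ, ← Real.rpow_add ht0]
      norm_num
    have e2 : t ^ (1-γ) * s = t := by
      rw [← htγ, ← Real.rpow_add ht0]
      norm_num
    have hb1' : 0 ≤ t ^ (-γ) := Real.rpow_nonneg ht0.le _
    have hb2' : 0 ≤ t ^ (1-γ) := Real.rpow_nonneg ht0.le _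
    have k1 : q * t ^ (-γ) * (1 + α) = 1 := by
      calc q * t^(-γ) * (1+α) = t^(-γ) * (q * (1+α)) := by ring
        _ = t^(-γ) * s := by rw [hq]
        _ = 1 := e1
    have k2 : q * t ^ (1-γ) * (1+α) = t := by
      calc q * t^(1-γ) * (1+α) = t^(1-γ) * (q * (1+α)) := by ring
        _ = t^(1-γ) * s := by rw [hq]
        _ = t := e2
    have k1' : q * t^(-γ) ≤ 1 := by nlinarith [mul_nonneg hq0 hb1']
    have k2' : q * t^(1-γ) ≤ t := by nlinarith [mul_nonneg hq0 hb2']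
    have m1 := mul_le_mul_of_nonneg_left htail hq0
    have m2 : q * A ^ (-γ) ≤ t :=
      le_trans (le_trans (mul_le_mul_of_nonneg_left hb1 hq0) k1') ht1
    have m3 : q * A ^ (1-γ) ≤ t :=
      le_trans (mul_le_mul_of_nonneg_left hb2 hq0) k2'
    have m4 := mul_le_mul_of_nonneg_left m2 hγ1.le
    nlinarith [m1, m3, m4]
  · -- t < 1
    have hB0' : B = 0 := hBint.resolve_left (by linarith)
    have hst : s ≤ t := by
      rw [← htγ]
      calc t ^ γ ≤ t ^ (1:ℝ) :=
            Real.rpow_le_rpow_of_exponent_ge ht0 ht1.le (by linarith)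
        _ = t := Real.rpow_one t
    have hA1' : A = 1 := by linarith
    rw [hA1', Real.one_rpow, Real.one_rpow] at htail
    have m1 := mul_le_mul_of_nonneg_left htail hq0
    have hqs : q ≤ s := by nlinarith [hq0]
    have hqt : q ≤ t := le_trans hqs hst
    have m5 : q * γ ≤ t * γ := mul_le_mul_of_nonneg_right hqt hγ0.le
    nlinarith [m1, m5]

end Aux

/-- Under (A1)-(A2), the Foschini-Gans capacity
`C_M = ∑ᵢ log₂(1 + κ M λᵢ)` of the system with fading matrix `F` is bounded by
`((κ ρ₊)^{1/γ} / ln 2) M^{1/γ} (γ/(γ-1) + ln(1 + κ ρ₊ M))`, with `ρ₊ = (1+α) f₊`. -/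
theorem capacity_sublinear_bound {M : ℕ} (hM : 1 ≤ M)
    (F : Matrix (Fin M) (Fin M) ℂ) (hF : F.PosSemidef)
    (α fplus γ κ : ℝ) (hα : 0 < α) (hfplus : 0 < fplus) (hγ : 1 < γ) (hκ : 0 < κ)
    (hmono : ∀ i j : Fin M, i ≤ j → (F j j).re ≤ (F i i).re)
    (hnonneg : ∀ i : Fin M, 0 ≤ (F i i).re)
    (hA1 : ∀ i : Fin M,
      ∑ p ∈ Finset.univ.filter (fun p : Fin M × Fin M => i ≤ p.1 ∧ p.1 < p.2),
        ‖F p.1 p.2‖ ≤ α * (F i i).re)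
    (hA2 : ∀ i : Fin M, (F i i).re ≤ fplus * ((i : ℝ) + 1) ^ (-γ)) :
    ∑ i, Real.logb 2 (1 + κ * M * hF.1.eigenvalues i)
      ≤ (κ * ((1 + α) * fplus)) ^ (1/γ) / Real.log 2 * (M : ℝ) ^ (1/γ)
          * (γ / (γ - 1) + Real.log (1 + κ * ((1 + α) * fplus) * M)) := by
  classical
  have hγ1 : (0:ℝ) < γ - 1 := by linarith
  have hγ0 : (0:ℝ) < γ := by linarith
  have hM0 : (0:ℝ) < (M:ℝ) := by exact_mod_cast hM
  set lam := hF.1.eigenvalues with hlamdef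
  set ρ : ℝ := (1 + α) * fplus with hρdef
  have hρ0 : 0 < ρ := by positivity
  set s : ℝ := κ * ρ * M with hsdef
  have hs0 : 0 < s := by positivity
  set t : ℝ := (κ * ρ) ^ (1/γ) * (M:ℝ) ^ (1/γ) with htdef
  have hts : t = s ^ (1/γ) := by
    rw [htdef, hsdef, ← Real.mul_rpow (by positivity) (by positivity)]
  have ht0 : 0 < t := by rw [hts]; positivity
  have htγ : t ^ γ = s := by
    rw [hts, ← Real.rpow_mul hs0.le, one_div, inv_mul_cancel₀ (ne_of_gt hγ0), Real.rpow_one]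
  have hL2 : 0 < Real.log 2 := Real.log_pos one_lt_two
  have hlogs0 : 0 ≤ Real.log (1 + s) := Real.log_nonneg (by linarith)
  have hlam0 : ∀ i, 0 ≤ lam i := fun i => hF.eigenvalues_nonneg i
  set zero : Fin M := ⟨0, hM⟩ with hzero
  set V : Fin M → Fin M → ℂ := fun i => ⇑(hF.1.eigenvectorBasis i) with hVdef
  -- Gershgorin-type bound on eigenvalues
  have heig_le : ∀ i, lam i ≤ ρ := by
    intro i
    have hv : F.mulVec (V i) = lam i • (V i) := hF.1.mulVec_eigenvectorBasis i
    obtain ⟨k, -, hk⟩ := Finset.exists_max_image Finset.univ (fun j => ‖V i j‖)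
      ⟨zero, Finset.mem_univ _⟩
    have hk0 : 0 < ‖V i k‖ := by
      rcases lt_or_ge 0 (‖V i k‖) with h | h
      · exact h
      · exfalso
        have hzero' : ∀ j, V i j = 0 := by
          intro j
          have h1 := hk j (Finset.mem_univ j)
          have : ‖V i j‖ ≤ 0 := le_trans h1 h
          simpa using le_antisymm this (norm_nonneg _)
        have hnorm := hF.1.eigenvectorBasis.orthonormal.1 i
        have hz : hF.1.eigenvectorBasis i = 0 := by
          ext j
          exact hzero' j
        rw [hz] at hnorm
        simp at hnorm
    have heq : ∑ j, F k j * V i j = (lam i : ℂ) * V i k := by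
      have h1 := congrFun hv k
      simpa [Matrix.mulVec, dotProduct, Pi.smul_apply, Complex.real_smul] using h1
    have habs : lam i * ‖V i k‖
        ≤ (∑ j, ‖F k j‖) * ‖V i k‖ := by
      calc lam i * ‖V i k‖
          = ‖(lam i : ℂ) * V i k‖ := by
            rw [norm_mul, Complex.norm_real, Real.norm_eq_abs, abs_of_nonneg (hlam0 i)]
        _ = ‖∑ j, F k j * V i j‖ := by rw [heq]
        _ ≤ ∑ j, ‖F k j * V i j‖ := norm_sum_le _ _
        _ = ∑ j, ‖F k j‖ * ‖V i j‖ := by simp [map_mul]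
        _ ≤ ∑ j, ‖F k j‖ * ‖V i k‖ :=
            Finset.sum_le_sum (fun j _ =>
              mul_le_mul_of_nonneg_left (hk j (Finset.mem_univ j)) (norm_nonneg _))
        _ = (∑ j, ‖F k j‖) * ‖V i k‖ := (Finset.sum_mul _ _ _).symm
    have h1 : lam i ≤ ∑ j, ‖F k j‖ := le_of_mul_le_mul_right habs hk0
    have hsplit : ∑ j, ‖F k j‖
        = ‖F k k‖ + ∑ j ∈ Finset.univ.erase k, ‖F k j‖ :=
      (Finset.add_sum_erase _ _ (Finset.mem_univ k)).symm
    have him : (F k k).im = 0 := by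
      have h2 := hF.1.apply k k
      rw [Complex.star_def, Complex.ext_iff] at h2
      simp only [Complex.conj_re, Complex.conj_im] at h2
      linarith [h2.2]
    have hreal : F k k = ((F k k).re : ℂ) := by
      apply Complex.ext
      · simp
      · simp [him]
    have hdiagk : ‖F k k‖ = (F k k).re := by
      rw [hreal, Complex.norm_real, Real.norm_eq_abs, abs_of_nonneg (hnonneg k)]
      simp
    have hrow : ∑ j ∈ Finset.univ.erase k, ‖F k j‖ ≤ α * (F zero zero).re := by
      set e : Fin M → Fin M × Fin M := fun j => if j < k then (j, k) else (k, j) with he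
      have hinj : ∀ a ∈ Finset.univ.erase k, ∀ b ∈ Finset.univ.erase k, e a = e b → a = b := by
        intro a ha b hb hab
        simp only [he] at hab
        split_ifs at hab with h1' h2' h2'
        · exact congrArg Prod.fst hab
        · exact absurd (congrArg Prod.fst hab) (Finset.mem_erase.mp ha).1
        · exact absurd (congrArg Prod.fst hab).symm (Finset.mem_erase.mp hb).1
        · exact congrArg Prod.snd hab
      have himg : ∑ j ∈ Finset.univ.erase k, ‖F k j‖
          = ∑ p ∈ (Finset.univ.erase k).image e, ‖F p.1 p.2‖ := by
        rw [Finset.sum_image hinj]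
        apply Finset.sum_congr rfl
        intro j hj
        simp only [he]
        split_ifs with h
        · rw [← hF.1.apply j k]
          simp
        · rfl
      have hsub : (Finset.univ.erase k).image e
          ⊆ Finset.univ.filter (fun p : Fin M × Fin M => zero ≤ p.1 ∧ p.1 < p.2) := by
        intro p hp
        simp only [Finset.mem_image, Finset.mem_erase, Finset.mem_univ, and_true] at hp
        obtain ⟨j, hj, rfl⟩ := hp
        simp only [Finset.mem_filter, Finset.mem_univ, true_and, he]
        split_ifs with h
        · exact ⟨Fin.mk_le_of_le_val (Nat.zero_le _), h⟩
        · exact ⟨Fin.mk_le_of_le_val (Nat.zero_le _), lt_of_le_of_ne (not_lt.mp h) (Ne.symm hj)⟩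
      calc ∑ j ∈ Finset.univ.erase k, ‖F k j‖
          = ∑ p ∈ (Finset.univ.erase k).image e, ‖F p.1 p.2‖ := himg
        _ ≤ ∑ p ∈ Finset.univ.filter (fun p : Fin M × Fin M => zero ≤ p.1 ∧ p.1 < p.2),
            ‖F p.1 p.2‖ :=
            Finset.sum_le_sum_of_subset_of_nonneg hsub (fun _ _ _ => norm_nonneg _)
        _ ≤ α * (F zero zero).re := hA1 zero
    have hf0 : (F zero zero).re ≤ fplus := by
      have := hA2 zero
      simpa [hzero, Real.one_rpow] using this
    have hfk : (F k k).re ≤ (F zero zero).re :=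
      hmono zero k (Fin.mk_le_of_le_val (Nat.zero_le _))
    rw [hρdef]
    nlinarith [hnonneg zero]
  -- spectral decomposition facts
  have hentry : ∀ j, F j j = ∑ i, (lam i : ℂ) * (Complex.normSq (V i j) : ℝ) := by
    intro j
    conv_lhs => rw [hF.1.spectral_theorem, Unitary.conjStarAlgAut_apply]
    rw [Matrix.mul_apply]
    apply Finset.sum_congr rfl
    intro l _
    rw [Matrix.mul_diagonal, Matrix.star_apply]
    have e1 : (Matrix.IsHermitian.eigenvectorUnitary hF.1 : Matrix (Fin M) (Fin M) ℂ) j l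
        = V l j := rfl
    rw [e1]
    simp only [Function.comp_apply, RCLike.star_def]
    rw [mul_comm (V l j), mul_assoc, Complex.mul_conj]
    rfl
  have hcol : ∀ i, ∑ j, Complex.normSq (V i j) = 1 := by
    intro i
    have h := Matrix.UnitaryGroup.star_mul_self (Matrix.IsHermitian.eigenvectorUnitary hF.1)
    have h2 := congrFun (congrFun (congrArg (fun B => (B : Matrix (Fin M) (Fin M) ℂ)) h) i) i
    simp only [Matrix.mul_apply, Matrix.star_apply, Matrix.one_apply_eq] at h2
    have h3 : ((∑ j, Complex.normSq (V i j) : ℝ) : ℂ) = 1 := by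
      push_cast
      rw [← h2]
      refine Finset.sum_congr rfl fun x _ => ?_
      simp only [RCLike.star_def]; rw [← Complex.normSq_eq_conj_mul_self]
      rfl
    exact_mod_cast h3
  have hrowsum : ∀ j, ∑ i, Complex.normSq (V i j) = 1 := by
    intro j
    have h := Matrix.mem_unitaryGroup_iff.mp (Matrix.IsHermitian.eigenvectorUnitary hF.1).2
    have h2 := congrFun (congrFun h j) j
    simp only [Matrix.mul_apply, Matrix.star_apply, Matrix.one_apply_eq] at h2
    have h3 : ((∑ i, Complex.normSq (V i j) : ℝ) : ℂ) = 1 := by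
      push_cast
      rw [← h2]
      refine Finset.sum_congr rfl fun x _ => ?_
      simp only [RCLike.star_def]; rw [Complex.mul_conj]
      rfl
    exact_mod_cast h3
  have hdiag : ∀ j, (F j j).re = ∑ i, lam i * Complex.normSq (V i j) := by
    intro j
    have h := congrArg Complex.re (hentry j)
    rw [h, Complex.re_sum]
    exact Finset.sum_congr rfl fun i _ => by rw [← Complex.ofReal_mul, Complex.ofReal_re]
  -- per-term log bounds
  have hterm_le : ∀ i, Real.log (1 + κ * M * lam i) ≤ Real.log (1 + s) := by
    intro i
    apply Real.log_le_log (by nlinarith [hlam0 i])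
    have : κ * M * lam i ≤ κ * M * ρ := by
      apply mul_le_mul_of_nonneg_left (heig_le i) (by positivity)
    rw [hsdef]; nlinarith
  have hterm_lin : ∀ x : ℝ, 0 ≤ x → Real.log (1 + κ * M * x) ≤ κ * M * x := by
    intro x hx
    have h1 := Real.log_le_sub_one_of_pos (show (0:ℝ) < 1 + κ * M * x by nlinarith)
    linarith
  -- reduce to natural-log inequality
  suffices h : ∑ i, Real.log (1 + κ * M * lam i) ≤ t * (γ/(γ-1) + Real.log (1+s)) by
    have heq : ∑ i, Real.logb 2 (1 + κ * M * lam i)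
        = (∑ i, Real.log (1 + κ * M * lam i)) / Real.log 2 := by
      rw [Finset.sum_div]
      exact Finset.sum_congr rfl fun i _ => rfl
    rw [heq]
    have hRHS : (κ * ρ) ^ (1/γ) / Real.log 2 * (M:ℝ) ^ (1/γ)
          * (γ / (γ - 1) + Real.log (1 + s))
        = t * (γ/(γ-1) + Real.log (1+s)) / Real.log 2 := by
      rw [htdef]; ring
    rw [hRHS]
    exact div_le_div_of_nonneg_right h hL2.le
  rcases le_or_gt (M:ℝ) t with hMt | htM
  · -- easy case M ≤ t
    calc ∑ i, Real.log (1 + κ*M*lam i) ≤ ∑ _i : Fin M, Real.log (1+s) :=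
          Finset.sum_le_sum (fun i _ => hterm_le i)
      _ = (M:ℝ) * Real.log (1+s) := by
          rw [Finset.sum_const, Finset.card_univ, Fintype.card_fin, nsmul_eq_mul]
      _ ≤ t * Real.log (1+s) := mul_le_mul_of_nonneg_right hMt hlogs0
      _ ≤ t * (γ/(γ-1) + Real.log (1+s)) := by
          have h0 : 0 ≤ t * (γ/(γ-1)) := by positivity
          nlinarith
  · -- main case t < M
    set N : ℕ := ⌊t⌋₊ with hNdef
    have hNt : (N:ℝ) ≤ t := Nat.floor_le ht0.le
    have htN1 : t < (N:ℝ) + 1 := Nat.lt_floor_add_one t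
    have hNM : N < M := by
      have : (N:ℝ) < M := lt_of_le_of_lt hNt htM
      exact_mod_cast this
    set σ := Tuple.sort lam with hσdef
    set μ : Fin M → ℝ := lam ∘ σ with hμdef
    have hμmono : Monotone μ := Tuple.monotone_sort lam
    set JT := Finset.univ.filter (fun j : Fin M => N ≤ j.val) with hJT
    set W : Fin M → ℝ := fun i => ∑ j ∈ JT, Complex.normSq (V i j) with hW
    have hcardJT : JT.card = M - N := by
      have h1 := Finset.card_filter_add_card_filter_not
        (s := Finset.univ) (p := fun j : Fin M => j.val < N)
      have h2 : Finset.univ.filter (fun j : Fin M => ¬ j.val < N) = JT := by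
        rw [hJT]
        apply Finset.filter_congr
        intro j _
        simp [not_lt]
      have h3 := card_filter_val_lt (M := M) N hNM.le
      rw [h2, h3, Finset.card_univ, Fintype.card_fin] at h1
      omega
    have hw0 : ∀ i, 0 ≤ W (σ i) := fun i =>
      Finset.sum_nonneg (fun j _ => Complex.normSq_nonneg _)
    have hw1 : ∀ i, W (σ i) ≤ 1 := by
      intro i
      calc W (σ i) ≤ ∑ j, Complex.normSq (V (σ i) j) :=
            Finset.sum_le_sum_of_subset_of_nonneg (Finset.subset_univ _)
              (fun _ _ _ => Complex.normSq_nonneg _)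
        _ = 1 := hcol (σ i)
    have hwsum : ∑ i, W (σ i) = ((M - N : ℕ) : ℝ) := by
      rw [Equiv.sum_comp σ W]
      calc ∑ i, W i = ∑ j ∈ JT, ∑ i, Complex.normSq (V i j) := Finset.sum_comm
        _ = ∑ _j ∈ JT, (1:ℝ) := Finset.sum_congr rfl (fun j _ => hrowsum j)
        _ = ((M - N : ℕ) : ℝ) := by rw [Finset.sum_const, hcardJT, nsmul_eq_mul, mul_one]
    have hmaj := sum_head_le_weighted (Nat.sub_le M N) μ (fun i => W (σ i)) hμmono
      hw0 hw1 hwsum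
    have hid : ∑ i, μ i * W (σ i) = ∑ j ∈ JT, (F j j).re := by
      have h1 : ∑ i, μ i * W (σ i) = ∑ i, lam i * W i :=
        Equiv.sum_comp σ (fun i => lam i * W i)
      rw [h1]
      calc ∑ i, lam i * W i = ∑ i, ∑ j ∈ JT, lam i * Complex.normSq (V i j) :=
            Finset.sum_congr rfl fun i _ => Finset.mul_sum _ _ _
        _ = ∑ j ∈ JT, ∑ i, lam i * Complex.normSq (V i j) := Finset.sum_comm
        _ = ∑ j ∈ JT, (F j j).re := Finset.sum_congr rfl fun j _ => (hdiag j).symm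
    set S : ℝ := ∑ m ∈ Finset.Ico (N+1) (M+1), (m:ℝ)^(-γ) with hSdef
    have hS0 : 0 ≤ S := Finset.sum_nonneg fun m _ => Real.rpow_nonneg (by positivity) _
    have hdiagtail : ∑ j ∈ JT, (F j j).re ≤ fplus * S := by
      have step1 : ∑ j ∈ JT, (F j j).re ≤ ∑ j ∈ JT, fplus * ((j:ℝ)+1)^(-γ) :=
        Finset.sum_le_sum (fun j _ => hA2 j)
      have himgJT : JT.image Fin.val = Finset.Ico N M := by
        ext m
        simp only [hJT, Finset.mem_image, Finset.mem_filter, Finset.mem_univ, true_and,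
          Finset.mem_Ico]
        constructor
        · rintro ⟨j, hj, rfl⟩
          exact ⟨hj, j.isLt⟩
        · rintro ⟨h1, h2⟩
          exact ⟨⟨m, h2⟩, h1, rfl⟩
      have hreidx : ∑ j ∈ JT, ((j:ℝ)+1)^(-γ)
          = ∑ m ∈ Finset.Ico N M, (((m:ℕ):ℝ)+1)^(-γ) := by
        rw [← himgJT, Finset.sum_image (fun a _ b _ h => Fin.val_injective h)]
      have hshift : ∑ m ∈ Finset.Ico N M, (((m:ℕ):ℝ)+1)^(-γ) = S := by
        rw [hSdef, Finset.sum_Ico_eq_sum_range, Finset.sum_Ico_eq_sum_range]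
        apply Finset.sum_congr
        · congr 1
          omega
        · intro k _
          congr 1
          push_cast
          ring
      calc ∑ j ∈ JT, (F j j).re ≤ ∑ j ∈ JT, fplus * ((j:ℝ)+1)^(-γ) := step1
        _ = fplus * ∑ j ∈ JT, ((j:ℝ)+1)^(-γ) := (Finset.mul_sum _ _ _).symm
        _ = fplus * S := by rw [hreidx, hshift]
    -- the key numeric bound
    have hqS : κ * M * fplus * S ≤ t + t/(γ-1) := by
      have htail := tail_rpow_sum hγ N M
      rw [← hSdef] at htail
      have hq : κ * (M:ℝ) * fplus * (1+α) = s := by rw [hsdef, hρdef]; ring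
      have hq0 : 0 ≤ κ * (M:ℝ) * fplus := by positivity
      refine key_numeric hγ hα hq hq0 ht0 hs0 htγ htN1.le rfl ?_ htail
      rcases le_or_gt 1 t with h1 | h1
      · exact Or.inl h1
      · refine Or.inr ?_
        have : N = 0 := Nat.floor_eq_zero.mpr h1
        rw [this, Nat.cast_zero]
    -- split the sum into head and tail
    have hresum : ∑ i, Real.log (1 + κ * M * lam i)
        = ∑ i, Real.log (1 + κ * M * μ i) :=
      (Equiv.sum_comp σ (fun i => Real.log (1 + κ * M * lam i))).symm
    rw [hresum,
      ← Finset.sum_filter_add_sum_filter_not Finset.univ (fun i : Fin M => i.val < M - N)]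
    have hTail : ∑ i ∈ Finset.univ.filter (fun i : Fin M => i.val < M - N),
        Real.log (1 + κ*M*μ i) ≤ κ*M * ∑ i ∈ Finset.univ.filter
          (fun i : Fin M => i.val < M - N), μ i := by
      rw [Finset.mul_sum]
      exact Finset.sum_le_sum fun i _ => hterm_lin (μ i) (hlam0 (σ i))
    have hHead : ∑ i ∈ Finset.univ.filter (fun i : Fin M => ¬ i.val < M - N),
        Real.log (1 + κ*M*μ i) ≤ (N:ℝ) * Real.log (1+s) := by
      have hcard2 : (Finset.univ.filter (fun i : Fin M => ¬ i.val < M - N)).card = N := by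
        have h1 := Finset.card_filter_add_card_filter_not
          (s := Finset.univ) (p := fun i : Fin M => i.val < M - N)
        have h3 := card_filter_val_lt (M := M) (M - N) (Nat.sub_le M N)
        rw [h3, Finset.card_univ, Fintype.card_fin] at h1
        omega
      calc ∑ i ∈ Finset.univ.filter (fun i : Fin M => ¬ i.val < M - N),
            Real.log (1 + κ*M*μ i)
          ≤ ∑ _i ∈ Finset.univ.filter (fun i : Fin M => ¬ i.val < M - N),
            Real.log (1+s) := Finset.sum_le_sum fun i _ => hterm_le (σ i)
        _ = (N:ℝ) * Real.log (1+s) := by rw [Finset.sum_const, hcard2, nsmul_eq_mul]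
    have hchain : κ*M * ∑ i ∈ Finset.univ.filter (fun i : Fin M => i.val < M - N), μ i
        ≤ κ*M*fplus*S := by
      have hκM : (0:ℝ) ≤ κ * M := by positivity
      calc κ*M * ∑ i ∈ Finset.univ.filter (fun i : Fin M => i.val < M - N), μ i
          ≤ κ*M * ∑ i, μ i * W (σ i) := mul_le_mul_of_nonneg_left hmaj hκM
        _ = κ*M * ∑ j ∈ JT, (F j j).re := by rw [hid]
        _ ≤ κ*M * (fplus * S) := mul_le_mul_of_nonneg_left hdiagtail hκM
        _ = κ*M*fplus*S := by ring
    have hfinal : t * (γ/(γ-1) + Real.log (1+s))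
        = (t + t/(γ-1)) + t * Real.log (1+s) := by
      field_simp
      ring
    have hNlog : (N:ℝ) * Real.log (1+s) ≤ t * Real.log (1+s) :=
      mul_le_mul_of_nonneg_right hNt hlogs0
    linarith [hTail, hHead, hchain, hqS, hNlog]
end

section
/- Let M ≥ 1 and let F be an M×M Hermitian complex matrix whose diagonal entries f_i := F_{i,i} satisfy f_1 ≥ f_2 ≥ … ≥ f_M ≥ 0 and assumption (A1) with constant α > 0. Then for every x ≥ 0, N(x;F) ≤ N((1+α)^{−1} x; F_D), where F_D is the diagonal part of F; that is, the number of eigenvalues of F strictly greater than x is at most the number of diagonal entries of F strictly greater than x/(1+α). -/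
open Finset Matrix

set_option maxHeartbeats 1000000 in
/-- Under (A1), for every `x ≥ 0`, the number of eigenvalues of `F` strictly
greater than `x` is at most the number of diagonal entries of `F` strictly greater than
`x/(1+α)` (which is the eigenvalue counting function of the diagonal part `F_D`). -/
theorem counting_le_diagonal_counting {M : ℕ} (hM : 1 ≤ M)
    (F : Matrix (Fin M) (Fin M) ℂ) (hF : F.IsHermitian)
    (α : ℝ) (hα : 0 < α)
    (hmono : ∀ i j : Fin M, i ≤ j → (F j j).re ≤ (F i i).re)
    (hnonneg : ∀ i : Fin M, 0 ≤ (F i i).re)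
    (hA1 : ∀ i : Fin M,
      ∑ p ∈ Finset.univ.filter (fun p : Fin M × Fin M => i ≤ p.1 ∧ p.1 < p.2),
        ‖F p.1 p.2‖ ≤ α * (F i i).re)
    (x : ℝ) (hx : 0 ≤ x) :
    (Finset.univ.filter (fun i => x < hF.eigenvalues i)).card
      ≤ (Finset.univ.filter (fun i : Fin M => x / (1 + α) < (F i i).re)).card := by
  classical
  by_contra hcon
  push_neg at hcon
  set S := Finset.univ.filter (fun i => x < hF.eigenvalues i) with hSdef
  set T := Finset.univ.filter (fun i : Fin M => x / (1 + α) < (F i i).re) with hTdef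
  have hTne : Tᶜ.Nonempty := by
    rw [← Finset.card_pos, Finset.card_compl]
    have h1 : S.card ≤ Fintype.card (Fin M) := Finset.card_le_univ S
    rw [Fintype.card_fin] at *
    omega
  set i0 := Tᶜ.min' hTne with hi0def
  have hi0T : i0 ∉ T := by
    have := Finset.min'_mem _ hTne
    rw [Finset.mem_compl] at this
    exact this
  have hf0 : (F i0 i0).re ≤ x / (1 + α) := by
    have : ¬ (x / (1 + α) < (F i0 i0).re) := by simpa [hTdef] using hi0T
    linarith
  have hIio : ∀ j : Fin M, j < i0 → j ∈ T := by
    intro j hj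
    by_contra h
    exact absurd (Finset.min'_le _ _ (Finset.mem_compl.2 h)) (not_le.2 hj)
  have hcard : (i0 : ℕ) ≤ T.card := by
    have h1 : Finset.Iio i0 ⊆ T := fun j hj => hIio j (Finset.mem_Iio.mp hj)
    have h2 := Finset.card_le_card h1
    rwa [Fin.card_Iio] at h2
  set m := (i0 : ℕ) with hmdef
  have hmM : m ≤ M := i0.isLt.le
  set B := hF.eigenvectorBasis with hBdef
  set u : Fin M → EuclideanSpace ℂ (Fin M) := fun i => B i with hudef
  set W : Submodule ℂ (EuclideanSpace ℂ (Fin M)) := Submodule.span ℂ (u '' S) with hWdef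
  have hWrank : Module.finrank ℂ W = S.card := by
    have hon : Orthonormal ℂ (fun i : (S : Set (Fin M)) => u i) :=
      B.orthonormal.comp _ Subtype.val_injective
    have h1 := finrank_span_eq_card hon.linearIndependent
    rw [hWdef, Set.image_eq_range]
    simpa [Fintype.card_coe] using h1
  let pr : EuclideanSpace ℂ (Fin M) →ₗ[ℂ] (Fin m → ℂ) :=
    { toFun := fun v j => v (Fin.castLE hmM j)
      map_add' := fun a b => rfl
      map_smul' := fun c a => rfl }
  have hker : LinearMap.ker (pr ∘ₗ W.subtype) ≠ ⊥ := by
    apply LinearMap.ker_ne_bot_of_finrank_lt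
    rw [hWrank, Module.finrank_fin_fun]
    omega
  obtain ⟨w, hwker, hwne⟩ := (Submodule.ne_bot_iff _).mp hker
  set v : EuclideanSpace ℂ (Fin M) := (w : EuclideanSpace ℂ (Fin M)) with hvdef
  have hvW : v ∈ W := w.2
  have hv0 : ∀ j : Fin M, (j : ℕ) < m → v j = 0 := by
    intro j hj
    have h1 : pr v = 0 := LinearMap.mem_ker.mp hwker
    have h2 := congrFun h1 ⟨j, hj⟩
    simpa [pr, Fin.castLE, Fin.ext_iff] using h2
  have hvne : v ≠ 0 := by
    simpa [hvdef, Submodule.coe_eq_zero] using hwne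
  set c : Fin M → ℂ := fun i => B.repr v i with hcdef
  have hcS : ∀ i, i ∉ S → c i = 0 := by
    intro i hi
    have hgen : ∀ y ∈ W, B.repr y i = 0 := by
      intro y hy
      refine Submodule.span_induction ?_ ?_ ?_ ?_ hy
      · rintro _ ⟨j, hj, rfl⟩
        have hjS : j ∈ S := by exact_mod_cast hj
        have hne : i ≠ j := fun h => hi (h ▸ hjS)
        rw [hudef]
        simp only [B.repr_self]
        rw [EuclideanSpace.single_apply]
        exact if_neg hne
      · simp
      · intro a b _ _ ha hb; simp [map_add, ha, hb]
      · intro r a _ ha; simp [_root_.map_smul, ha]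
    exact hgen v hvW
  have hsum : ∑ i, c i • u i = v := B.sum_repr v
  set nv := ∑ j, Complex.normSq (v j) with hnvdef
  set nc := ∑ i, Complex.normSq (c i) with hncdef
  have hnorm : nc = nv := by
    have h1 : ‖B.repr v‖ = ‖v‖ := B.repr.norm_map v
    have h2 := EuclideanSpace.norm_eq (B.repr v)
    have h3 := EuclideanSpace.norm_eq v
    have h4 : ∑ i, ‖B.repr v i‖ ^ 2 = ∑ j, ‖v j‖ ^ 2 := by
      have h5 := congrArg (· ^ 2) h1
      simp only [h2, h3] at h5
      rwa [Real.sq_sqrt (Finset.sum_nonneg fun _ _ => sq_nonneg _),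
        Real.sq_sqrt (Finset.sum_nonneg fun _ _ => sq_nonneg _)] at h5
    simpa [hncdef, hnvdef, hcdef, Complex.normSq_eq_norm_sq] using h4
  have hFv : F *ᵥ v = ∑ i, (c i * (hF.eigenvalues i : ℂ)) • (u i : Fin M → ℂ) := by
    conv_lhs => rw [← hsum]
    rw [WithLp.ofLp_sum]
    simp only [WithLp.ofLp_smul]
    rw [show F *ᵥ (∑ i, c i • u i) = Matrix.mulVecLin F (∑ i, c i • u i) from rfl]
    rw [map_sum]
    refine Finset.sum_congr rfl fun i _ => ?_
    rw [_root_.map_smul, Matrix.mulVecLin_apply]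
    have hui : F *ᵥ (u i : Fin M → ℂ) = hF.eigenvalues i • (u i : Fin M → ℂ) :=
      hF.mulVec_eigenvectorBasis i
    rw [hui]
    ext j
    simp [hudef, Complex.real_smul]
    ring
  have hdps : ∀ (g : Fin M → Fin M → ℂ),
      dotProduct (star v) (∑ i, g i) = ∑ i, dotProduct (star v) (g i) := by
    intro g
    simp only [dotProduct, Finset.sum_apply, Finset.mul_sum]
    exact Finset.sum_comm
  have hvu : ∀ i, dotProduct (star v) (u i : Fin M → ℂ) = (starRingEnd ℂ) (c i) := by
    intro i
    have h2 : (inner ℂ (u i) v : ℂ) = c i := (B.repr_apply_apply v i).symm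
    have h3 : (inner ℂ v (u i) : ℂ) = dotProduct (star v) (u i) := by
      rw [EuclideanSpace.inner_eq_star_dotProduct, dotProduct_comm]
    rw [← h3, ← inner_conj_symm, h2]
  have hkey : dotProduct (star v) (F *ᵥ v)
      = ∑ i, ((hF.eigenvalues i : ℂ) * (Complex.normSq (c i) : ℂ)) := by
    rw [hFv, hdps]
    refine Finset.sum_congr rfl fun i _ => ?_
    rw [dotProduct_smul, smul_eq_mul, hvu]
    rw [show c i * (hF.eigenvalues i : ℂ) * (starRingEnd ℂ) (c i)
        = (hF.eigenvalues i : ℂ) * (c i * (starRingEnd ℂ) (c i)) from by ring,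
      Complex.mul_conj]
  have hlow : x * nc < (dotProduct (star v) (F *ᵥ v)).re := by
    rw [hkey]
    have hre : (∑ i, ((hF.eigenvalues i : ℂ) * (Complex.normSq (c i) : ℂ))).re
        = ∑ i, hF.eigenvalues i * Complex.normSq (c i) := by
      rw [Complex.re_sum]
      refine Finset.sum_congr rfl fun i _ => ?_
      rw [← Complex.ofReal_mul, Complex.ofReal_re]
    rw [hre]
    have hS1 : ∑ i, hF.eigenvalues i * Complex.normSq (c i)
        = ∑ i ∈ S, hF.eigenvalues i * Complex.normSq (c i) :=
      (Finset.sum_subset (Finset.subset_univ S) (fun i _ hi => by simp [hcS i hi])).symm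
    have hS2 : nc = ∑ i ∈ S, Complex.normSq (c i) := by
      rw [hncdef]
      exact (Finset.sum_subset (Finset.subset_univ S) (fun i _ hi => by simp [hcS i hi])).symm
    rw [hS1, hS2, Finset.mul_sum]
    obtain ⟨i₁, hi₁⟩ : ∃ i, c i ≠ 0 := by
      by_contra h
      push_neg at h
      apply hvne
      have hrz : B.repr v = 0 := by
        ext i
        exact h i
      exact B.repr.injective (by rw [hrz]; simp)
    have hi₁S : i₁ ∈ S := by
      by_contra h
      exact hi₁ (hcS _ h)
    refine Finset.sum_lt_sum (fun i hiS => ?_) ⟨i₁, hi₁S, ?_⟩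
    · have hxe : x < hF.eigenvalues i := by
        rw [hSdef] at hiS
        exact (Finset.mem_filter.mp hiS).2
      exact mul_le_mul_of_nonneg_right hxe.le (Complex.normSq_nonneg _)
    · have hxe : x < hF.eigenvalues i₁ := by
        rw [hSdef] at hi₁S
        exact (Finset.mem_filter.mp hi₁S).2
      have hpos := Complex.normSq_pos.mpr hi₁
      exact mul_lt_mul_of_pos_right hxe hpos
  -- upper bound
  have hnv0 : (0:ℝ) ≤ nv := Finset.sum_nonneg fun j _ => Complex.normSq_nonneg _
  set g : Fin M → Fin M → ℝ := fun j k => ((starRingEnd ℂ) (v j) * (F j k * v k)).re with hgdef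
  set P : Finset (Fin M × Fin M) := Finset.univ.filter (fun p : Fin M × Fin M => p.1 < p.2)
    with hPdef
  have hdot : (star v ⬝ᵥ (F *ᵥ v)).re = ∑ j, ∑ k, g j k := by
    simp only [dotProduct, Matrix.mulVec, Pi.star_apply, Complex.star_def,
      Finset.mul_sum, Complex.re_sum, hgdef]
  have hdiagset : ∑ p ∈ Finset.univ.filter (fun p : Fin M × Fin M => p.1 = p.2), g p.1 p.2
      = ∑ j, g j j := by
    rw [Finset.sum_filter, ← Finset.univ_product_univ, Finset.sum_product]
    simp
  have hPfilter : (Finset.univ.filter (fun p : Fin M × Fin M => ¬ p.1 = p.2)).filter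
      (fun p => p.1 < p.2) = P := by
    rw [hPdef, Finset.filter_filter]
    ext p
    simp only [Finset.mem_filter, Finset.mem_univ, true_and]
    exact ⟨fun h => h.2, fun h => ⟨ne_of_lt h, h⟩⟩
  have hGfilter : (Finset.univ.filter (fun p : Fin M × Fin M => ¬ p.1 = p.2)).filter
      (fun p => ¬ p.1 < p.2) = Finset.univ.filter (fun p : Fin M × Fin M => p.2 < p.1) := by
    rw [Finset.filter_filter]
    ext p
    simp only [Finset.mem_filter, Finset.mem_univ, true_and]
    constructor
    · rintro ⟨h1, h2⟩
      exact lt_of_le_of_ne (not_lt.mp h2) (fun h => h1 h.symm)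
    · intro h
      exact ⟨fun he => (ne_of_lt h) he.symm, not_lt.mpr h.le⟩
  have hswap : ∑ p ∈ Finset.univ.filter (fun p : Fin M × Fin M => p.2 < p.1), g p.1 p.2
      = ∑ p ∈ P, g p.2 p.1 := by
    refine Finset.sum_nbij' Prod.swap Prod.swap ?_ ?_ ?_ ?_ ?_
    · intro p hp
      simp only [hPdef, Finset.mem_filter, Finset.mem_univ, true_and, Prod.fst_swap,
        Prod.snd_swap] at hp ⊢
      exact hp
    · intro p hp
      simp only [hPdef, Finset.mem_filter, Finset.mem_univ, true_and, Prod.fst_swap,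
        Prod.snd_swap] at hp ⊢
      exact hp
    · intro p _; rfl
    · intro p _; rfl
    · intro p _; rfl
  have hsplit : ∑ p : Fin M × Fin M, g p.1 p.2
      = (∑ j, g j j) + ∑ p ∈ P, (g p.1 p.2 + g p.2 p.1) := by
    have e1 := Finset.sum_filter_add_sum_filter_not Finset.univ
      (fun p : Fin M × Fin M => p.1 = p.2) (fun p => g p.1 p.2)
    have e2 := Finset.sum_filter_add_sum_filter_not
      (Finset.univ.filter (fun p : Fin M × Fin M => ¬ p.1 = p.2))
      (fun p : Fin M × Fin M => p.1 < p.2) (fun p => g p.1 p.2)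
    rw [hPfilter, hGfilter, hswap] at e2
    rw [Finset.sum_add_distrib, e2, ← hdiagset, e1]
  have hgdiag : ∀ j, g j j = (F j j).re * Complex.normSq (v j) := by
    intro j
    have hreal : F j j = ((F j j).re : ℂ) := by
      have h1 : (starRingEnd ℂ) (F j j) = F j j := by
        have h2 := congrFun (congrFun hF j) j
        simpa [Matrix.conjTranspose_apply] using h2
      exact (Complex.conj_eq_iff_re.mp h1).symm
    rw [hgdef]
    dsimp only
    rw [hreal, show (starRingEnd ℂ) (v j) * (((F j j).re : ℂ) * v j)
        = ((F j j).re : ℂ) * (v j * (starRingEnd ℂ) (v j)) from by ring,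
      Complex.mul_conj, ← Complex.ofReal_mul, Complex.ofReal_re]
    simp
  have hdiagle : ∑ j, g j j ≤ (F i0 i0).re * nv := by
    rw [hnvdef, Finset.mul_sum]
    refine Finset.sum_le_sum fun j _ => ?_
    rw [hgdiag j]
    rcases lt_or_ge j i0 with hj | hj
    · rw [hv0 j hj]
      simp
    · exact mul_le_mul_of_nonneg_right (hmono i0 j hj) (Complex.normSq_nonneg _)
  have habs : ∀ j k, g j k ≤ ‖F j k‖ * (‖v j‖ * ‖v k‖) := by
    intro j k
    calc g j k ≤ ‖(starRingEnd ℂ) (v j) * (F j k * v k)‖ := Complex.re_le_norm _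
    _ = ‖F j k‖ * (‖v j‖ * ‖v k‖) := by
        rw [norm_mul, norm_mul, Complex.norm_conj]
        ring
  have hpair : ∀ p : Fin M × Fin M, p ∈ P → g p.1 p.2 + g p.2 p.1
      ≤ (if i0 ≤ p.1 then ‖F p.1 p.2‖ * nv else 0) := by
    intro p hp
    have hlt : p.1 < p.2 := by
      rw [hPdef] at hp
      exact (Finset.mem_filter.mp hp).2
    by_cases hc : i0 ≤ p.1
    · rw [if_pos hc]
      have h1 := habs p.1 p.2
      have h2 := habs p.2 p.1
      have hsym : ‖F p.2 p.1‖ = ‖F p.1 p.2‖ := by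
        have h3 := congrFun (congrFun hF p.2) p.1
        rw [Matrix.conjTranspose_apply] at h3
        rw [← h3, Complex.star_def, Complex.norm_conj]
      have hb : Complex.normSq (v p.1) + Complex.normSq (v p.2) ≤ nv := by
        rw [hnvdef]
        have h4 := Finset.sum_le_sum_of_subset_of_nonneg
          (Finset.subset_univ ({p.1, p.2} : Finset (Fin M)))
          (fun j _ _ => Complex.normSq_nonneg (v j))
        rwa [Finset.sum_pair (ne_of_lt hlt)] at h4
      have h2ab : 2 * (‖v p.1‖ * ‖v p.2‖)
          ≤ Complex.normSq (v p.1) + Complex.normSq (v p.2) := by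
        rw [Complex.normSq_eq_norm_sq, Complex.normSq_eq_norm_sq]
        nlinarith [sq_nonneg (‖v p.1‖ - ‖v p.2‖)]
      have habF : (0:ℝ) ≤ ‖F p.1 p.2‖ := norm_nonneg _
      rw [hsym] at h2
      nlinarith
    · rw [if_neg hc]
      have hv1 : v p.1 = 0 := hv0 p.1 (not_le.mp hc)
      rw [hgdef]
      dsimp only
      rw [hv1]
      simp
  have hoffle : ∑ p ∈ P, (g p.1 p.2 + g p.2 p.1) ≤ α * (F i0 i0).re * nv := by
    calc ∑ p ∈ P, (g p.1 p.2 + g p.2 p.1)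
        ≤ ∑ p ∈ P, (if i0 ≤ p.1 then ‖F p.1 p.2‖ * nv else 0) :=
        Finset.sum_le_sum hpair
    _ = ∑ p ∈ P.filter (fun p => i0 ≤ p.1), ‖F p.1 p.2‖ * nv :=
        (Finset.sum_filter _ _).symm
    _ = (∑ p ∈ P.filter (fun p => i0 ≤ p.1), ‖F p.1 p.2‖) * nv := by
        rw [Finset.sum_mul]
    _ ≤ (α * (F i0 i0).re) * nv := by
        refine mul_le_mul_of_nonneg_right ?_ hnv0
        have hsetseq : P.filter (fun p => i0 ≤ p.1)
            = Finset.univ.filter (fun p : Fin M × Fin M => i0 ≤ p.1 ∧ p.1 < p.2) := by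
          rw [hPdef, Finset.filter_filter]
          ext p
          simp only [Finset.mem_filter, Finset.mem_univ, true_and]
          exact ⟨fun h => ⟨h.2, h.1⟩, fun h => ⟨h.2, h.1⟩⟩
        rw [hsetseq]
        exact hA1 i0
  have hup : (star v ⬝ᵥ (F *ᵥ v)).re ≤ x * nv := by
    rw [hdot]
    have hps : ∑ j, ∑ k, g j k = ∑ p : Fin M × Fin M, g p.1 p.2 := by
      rw [← Finset.univ_product_univ, Finset.sum_product]
    rw [hps, hsplit]
    have h1α : (0:ℝ) < 1 + α := by linarith
    have hf0' : (1 + α) * (F i0 i0).re ≤ x := by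
      have h5 := (le_div_iff₀ h1α).mp hf0
      linarith
    nlinarith [hdiagle, hoffle, hnv0, mul_le_mul_of_nonneg_right hf0' hnv0]
  rw [hnorm] at hlow
  exact absurd (hlow.trans_le hup) (lt_irrefl _)
end

section
/- Let n_A, n_B be positive integers, let A be an n_A×n_A Hermitian complex matrix, B an n_B×n_B Hermitian complex matrix, and C an arbitrary n_A×n_B complex matrix, and let M be the (n_A+n_B)×(n_A+n_B) Hermitian block matrix with blocks A, C in the first block row and C*, B in the second block row. Then for every real x, the number of eigenvalues of B (counted with multiplicity) that are less than or equal to x is at most the number of eigenvalues of M (counted with multiplicity) that are less than or equal to x. -/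
open scoped Matrix ComplexOrder
open Matrix Submodule Module

variable {ι : Type*} [Fintype ι] [DecidableEq ι]

lemma aux1 {H : Matrix ι ι ℂ} (hH : H.IsHermitian) (i : ι) :
    Matrix.toEuclideanLin H (hH.eigenvectorBasis i) = (hH.eigenvalues i : ℂ) • hH.eigenvectorBasis i := by
  have := hH.mulVec_eigenvectorBasis i
  ext j
  have := congrFun this j
  simpa [Matrix.toEuclideanLin_apply, Complex.real_smul] using this

lemma aux2 {H : Matrix ι ι ℂ} (hH : H.IsHermitian) (v : EuclideanSpace ℂ ι) (i : ι) :
    hH.eigenvectorBasis.repr (Matrix.toEuclideanLin H v) i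
      = (hH.eigenvalues i : ℂ) * hH.eigenvectorBasis.repr v i := by
  set e := hH.eigenvectorBasis
  have hv : Matrix.toEuclideanLin H v
      = ∑ j, (e.repr v j * (hH.eigenvalues j : ℂ)) • e j := by
    conv_lhs => rw [← e.sum_repr v]
    rw [map_sum]
    refine Finset.sum_congr rfl fun j _ => ?_
    rw [LinearMap.map_smul, aux1 hH j, smul_smul, mul_comm]
  rw [e.repr_apply_apply, hv, inner_sum]
  simp [inner_smul_right, orthonormal_iff_ite.mp e.orthonormal, ← e.repr_apply_apply, mul_comm]

lemma aux3 {H : Matrix ι ι ℂ} (hH : H.IsHermitian) (v : EuclideanSpace ℂ ι) :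
    (inner ℂ v (Matrix.toEuclideanLin H v) : ℂ)
      = ((∑ i, hH.eigenvalues i * ‖hH.eigenvectorBasis.repr v i‖ ^ 2 : ℝ) : ℂ) := by
  set e := hH.eigenvectorBasis
  rw [← LinearIsometryEquiv.inner_map_map e.repr]
  rw [PiLp.inner_apply]
  push_cast
  refine Finset.sum_congr rfl fun i _ => ?_
  rw [RCLike.inner_apply', aux2 hH v i]
  rw [show (starRingEnd ℂ) (e.repr v i) * ((hH.eigenvalues i : ℂ) * e.repr v i)
      = (hH.eigenvalues i : ℂ) * ((starRingEnd ℂ) (e.repr v i) * e.repr v i) by ring]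
  rw [RCLike.conj_mul]
  norm_num

lemma aux4 (e : OrthonormalBasis ι ℂ (EuclideanSpace ℂ ι)) (v : EuclideanSpace ℂ ι) :
    (inner ℂ v v : ℂ) = ((∑ i, ‖e.repr v i‖ ^ 2 : ℝ) : ℂ) := by
  rw [← LinearIsometryEquiv.inner_map_map e.repr, PiLp.inner_apply]
  push_cast
  refine Finset.sum_congr rfl fun i _ => ?_
  rw [RCLike.inner_apply', RCLike.conj_mul]
  norm_cast

lemma repr_zero_of_mem_span (e : OrthonormalBasis ι ℂ (EuclideanSpace ℂ ι)) (s : Set ι)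
    {v : EuclideanSpace ℂ ι} (h : v ∈ span ℂ (⇑e '' s)) {i : ι} (hi : i ∉ s) :
    e.repr v i = 0 := by
  have hsub := Basis.repr_support_subset_of_mem_span e.toBasis s
    (by rwa [e.coe_toBasis])
  have : i ∉ (e.toBasis.repr v).support := fun hmem => hi (hsub hmem)
  rw [Finsupp.notMem_support_iff] at this
  rw [← e.coe_toBasis_repr_apply, this]

lemma quad_le {H : Matrix ι ι ℂ} (hH : H.IsHermitian) (x : ℝ) {v : EuclideanSpace ℂ ι}
    (h : v ∈ span ℂ (⇑hH.eigenvectorBasis '' {i | hH.eigenvalues i ≤ x})) :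
    (inner ℂ v (Matrix.toEuclideanLin H v) : ℂ).re ≤ x * (inner ℂ v v : ℂ).re := by
  rw [aux3 hH, aux4 hH.eigenvectorBasis, Complex.ofReal_re, Complex.ofReal_re, Finset.mul_sum]
  refine Finset.sum_le_sum fun i _ => ?_
  by_cases hz : hH.eigenvectorBasis.repr v i = 0
  · simp [hz]
  · have hi : hH.eigenvalues i ≤ x := by
      by_contra hc
      exact hz (repr_zero_of_mem_span _ _ h (by simpa using hc))
    have : (0:ℝ) ≤ ‖hH.eigenvectorBasis.repr v i‖ ^ 2 := by positivity
    nlinarith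

lemma quad_lt {H : Matrix ι ι ℂ} (hH : H.IsHermitian) (x : ℝ) {v : EuclideanSpace ℂ ι}
    (h : v ∈ span ℂ (⇑hH.eigenvectorBasis '' {i | ¬ hH.eigenvalues i ≤ x})) (hv : v ≠ 0) :
    x * (inner ℂ v v : ℂ).re < (inner ℂ v (Matrix.toEuclideanLin H v) : ℂ).re := by
  rw [aux3 hH, aux4 hH.eigenvectorBasis, Complex.ofReal_re, Complex.ofReal_re, Finset.mul_sum]
  obtain ⟨i0, hi0⟩ : ∃ i, hH.eigenvectorBasis.repr v i ≠ 0 := by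
    by_contra hc
    push_neg at hc
    apply hv
    have : hH.eigenvectorBasis.repr v = 0 := by
      ext i
      exact hc i
    simpa using congrArg hH.eigenvectorBasis.repr.symm this
  refine Finset.sum_lt_sum (fun i _ => ?_) ⟨i0, Finset.mem_univ i0, ?_⟩
  · by_cases hz : hH.eigenvectorBasis.repr v i = 0
    · simp [hz]
    · have hi : ¬ hH.eigenvalues i ≤ x := by
        by_contra hc
        exact hz (repr_zero_of_mem_span _ _ h (by simpa using hc))
      have : (0:ℝ) ≤ ‖hH.eigenvectorBasis.repr v i‖ ^ 2 := by positivity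
      nlinarith [lt_of_not_ge hi]
  · have hi : ¬ hH.eigenvalues i0 ≤ x := by
      by_contra hc
      exact hi0 (repr_zero_of_mem_span _ _ h (by simpa using hc))
    have hp : (0:ℝ) < ‖hH.eigenvectorBasis.repr v i0‖ ^ 2 := by
      have := norm_pos_iff.mpr hi0
      positivity
    nlinarith [lt_of_not_ge hi]

lemma finrank_span_onb (e : OrthonormalBasis ι ℂ (EuclideanSpace ℂ ι)) (s : Finset ι) :
    finrank ℂ (span ℂ (⇑e '' ↑s)) = s.card := by
  have hrange : Set.range (⇑e ∘ (Subtype.val : ↥s → ι)) = ⇑e '' ↑s := by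
    rw [Set.range_comp]
    congr 1
    simp
  rw [← hrange, finrank_span_eq_card, Fintype.card_coe]
  have h1 : LinearIndependent ℂ ⇑e := by
    have := e.toBasis.linearIndependent
    rwa [e.coe_toBasis] at this
  exact h1.comp _ Subtype.val_injective

lemma finrank_span_map {κ : Type*} [Fintype κ] [DecidableEq κ]
    (f : EuclideanSpace ℂ κ →ₗ[ℂ] EuclideanSpace ℂ ι) (hf : Function.Injective f)
    (e : OrthonormalBasis κ ℂ (EuclideanSpace ℂ κ)) (s : Finset κ) :
    finrank ℂ (span ℂ (⇑f '' (⇑e '' ↑s))) = s.card := by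
  rw [Submodule.span_image]
  rw [← (Submodule.equivMapOfInjective f hf (span ℂ (⇑e '' ↑s))).finrank_eq]
  exact finrank_span_onb e s

noncomputable def embR (α β : Type*) : (EuclideanSpace ℂ β) →ₗ[ℂ] EuclideanSpace ℂ (α ⊕ β) where
  toFun w := WithLp.toLp 2 (Sum.elim 0 w.ofLp)
  map_add' u v := by ext i; cases i <;> simp
  map_smul' c v := by ext i; cases i <;> simp

lemma embR_inj (α β : Type*) : Function.Injective (embR α β) := by
  intro u v h
  ext i
  exact congrFun (congrArg WithLp.ofLp h) (Sum.inr i)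

lemma inner_embR {α β : Type*} [Fintype α] [Fintype β] (w w' : EuclideanSpace ℂ β) :
    (inner ℂ (embR α β w) (embR α β w') : ℂ) = inner ℂ w w' := by
  rw [PiLp.inner_apply, PiLp.inner_apply, Fintype.sum_sum_type]
  simp [embR]

lemma inner_embR_block {nA nB : ℕ} (A : Matrix (Fin nA) (Fin nA) ℂ)
    (B : Matrix (Fin nB) (Fin nB) ℂ) (C : Matrix (Fin nA) (Fin nB) ℂ)
    (w : EuclideanSpace ℂ (Fin nB)) :
    (inner ℂ (embR (Fin nA) (Fin nB) w)
        (Matrix.toEuclideanLin (Matrix.fromBlocks A C Cᴴ B) (embR (Fin nA) (Fin nB) w)) : ℂ)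
      = inner ℂ w (Matrix.toEuclideanLin B w) := by
  rw [PiLp.inner_apply, PiLp.inner_apply, Fintype.sum_sum_type]
  have hmv : ∀ i, (Matrix.toEuclideanLin (Matrix.fromBlocks A C Cᴴ B) (embR (Fin nA) (Fin nB) w)) i
      = Sum.elim (C *ᵥ w) (B *ᵥ w) i := by
    intro i
    have : (Matrix.fromBlocks A C Cᴴ B) *ᵥ (Sum.elim 0 ⇑w) = Sum.elim (C *ᵥ w) (B *ᵥ w) := by
      rw [Matrix.fromBlocks_mulVec]
      have h0 : A *ᵥ (0 : Fin nA → ℂ) = 0 := Matrix.mulVec_zero A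
      have h0' : Cᴴ *ᵥ (0 : Fin nA → ℂ) = 0 := Matrix.mulVec_zero _
      show Sum.elim (A *ᵥ 0 + C *ᵥ _) (Cᴴ *ᵥ 0 + B *ᵥ _) = _
      rw [h0, h0', zero_add, zero_add]
      rfl
    simpa [Matrix.toEuclideanLin_apply, embR] using congrFun this i
  simp only [hmv]
  simp only [embR, LinearMap.coe_mk, AddHom.coe_mk, Sum.elim_inl, Sum.elim_inr,
    Pi.zero_apply, inner_zero_left, Finset.sum_const_zero, zero_add]
  rfl



open scoped Matrix

/-- For a Hermitian block matrix `M = [[A, C], [Cᴴ, B]]` and every real `x`,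
the number of eigenvalues of `B` less than or equal to `x` is at most the number of
eigenvalues of `M` less than or equal to `x` (eigenvalues counted with multiplicity). -/
theorem block_counting_le_bound {nA nB : ℕ} (hnA : 0 < nA) (hnB : 0 < nB)
    (A : Matrix (Fin nA) (Fin nA) ℂ) (B : Matrix (Fin nB) (Fin nB) ℂ)
    (C : Matrix (Fin nA) (Fin nB) ℂ)
    (hA : A.IsHermitian) (hB : B.IsHermitian)
    (hM : (Matrix.fromBlocks A C Cᴴ B).IsHermitian) (x : ℝ) :
    (Finset.univ.filter (fun i => hB.eigenvalues i ≤ x)).card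
      ≤ (Finset.univ.filter (fun i => hM.eigenvalues i ≤ x)).card := by
  classical
  by_contra hcon
  push_neg at hcon
  set ι := (Fin nA ⊕ Fin nB)
  set sB : Finset (Fin nB) := Finset.univ.filter (fun i => hB.eigenvalues i ≤ x) with hsB
  set sM : Finset ι := Finset.univ.filter (fun i => hM.eigenvalues i ≤ x) with hsM
  set sM' : Finset ι := Finset.univ.filter (fun i => ¬ hM.eigenvalues i ≤ x) with hsM'
  set L := embR (Fin nA) (Fin nB)
  set W : Submodule ℂ (EuclideanSpace ℂ ι) :=
    span ℂ (⇑L '' (⇑hB.eigenvectorBasis '' ↑sB)) with hW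
  set U : Submodule ℂ (EuclideanSpace ℂ ι) :=
    span ℂ (⇑hM.eigenvectorBasis '' ↑sM') with hU
  have hWrank : finrank ℂ W = sB.card := finrank_span_map L (embR_inj _ _) _ _
  have hUrank : finrank ℂ U = sM'.card := finrank_span_onb _ _
  have hcards : sM.card + sM'.card = Fintype.card ι := by
    rw [hsM, hsM']
    exact Finset.card_filter_add_card_filter_not _
  have hsup : finrank ℂ ↥(W ⊔ U) ≤ Fintype.card ι := by
    have := Submodule.finrank_le (W ⊔ U)
    rwa [finrank_euclideanSpace] at this
  have hsums := Submodule.finrank_sup_add_finrank_inf_eq W U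
  have hinf : 0 < finrank ℂ ↥(W ⊓ U) := by omega
  obtain ⟨⟨v, hvWU⟩, hvne⟩ := Module.finrank_pos_iff_exists_ne_zero.mp hinf
  have hvne' : v ≠ 0 := by
    simpa [Submodule.mk_eq_zero] using hvne
  have hvW : v ∈ W := hvWU.1
  have hvU : v ∈ U := hvWU.2
  -- from U membership : strict lower bound
  have hUset : (↑sM' : Set ι) = {i | ¬ hM.eigenvalues i ≤ x} := by
    rw [hsM']; ext i; simp; exact Iff.rfl
  have hlt : x * (inner ℂ v v : ℂ).re
      < (inner ℂ v (Matrix.toEuclideanLin (Matrix.fromBlocks A C Cᴴ B) v) : ℂ).re := by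
    refine quad_lt hM x ?_ hvne'
    rwa [← hUset]
  -- from W membership : upper bound
  obtain ⟨w, hw, rfl⟩ : ∃ w ∈ span ℂ (⇑hB.eigenvectorBasis '' ↑sB), L w = v := by
    rw [hW, Submodule.span_image] at hvW
    exact hvW
  have hBset : (↑sB : Set (Fin nB)) = {i | hB.eigenvalues i ≤ x} := by
    rw [hsB]; ext i; simp
  have hle : (inner ℂ w (Matrix.toEuclideanLin B w) : ℂ).re ≤ x * (inner ℂ w w : ℂ).re := by
    refine quad_le hB x ?_
    rwa [← hBset]
  rw [inner_embR_block A B C w] at hlt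
  rw [inner_embR] at hlt
  linarith
end

section
/- Let M ≥ 1 and let F be an M×M Hermitian complex matrix whose diagonal entries f_i := F_{i,i} satisfy f_1 ≥ f_2 ≥ … ≥ f_M ≥ 0 and assumption (A1) with constant α > 0, and suppose in addition there are constants f_+ > 0 and γ > 1 with f_i ≤ f_+ i^{−γ} for all i. Then the operator norm of F is at most (1+α) f_+; in particular the spectral radius ρ of F satisfies ρ ≤ ρ_+ := (1+α) f_+. -/
/-- The operator norm on square complex matrices induced by the Hermitian (ℓ²) norm. -/
noncomputable def l2OpNorm {n : Type*} [Fintype n] [DecidableEq n] (A : Matrix n n ℂ) : ℝ :=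
  ‖Matrix.toEuclideanCLM (𝕜 := ℂ) A‖

open Finset in
lemma quad_bound {M : ℕ} (hM : 1 ≤ M)
    (F : Matrix (Fin M) (Fin M) ℂ) (hF : F.IsHermitian)
    (α fplus γ : ℝ) (hα : 0 < α) (hfplus : 0 < fplus) (hγ : 1 < γ)
    (hmono : ∀ i j : Fin M, i ≤ j → (F j j).re ≤ (F i i).re)
    (hnonneg : ∀ i : Fin M, 0 ≤ (F i i).re)
    (hA1 : ∀ i : Fin M,
      ∑ p ∈ Finset.univ.filter (fun p : Fin M × Fin M => i ≤ p.1 ∧ p.1 < p.2),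
        ‖F p.1 p.2‖ ≤ α * (F i i).re)
    (hA2 : ∀ i : Fin M, (F i i).re ≤ fplus * ((i : ℝ) + 1) ^ (-γ))
    (x : Fin M → ℂ) :
    ‖∑ i, star (x i) * ∑ j, F i j * x j‖
      ≤ (1 + α) * fplus * ∑ i, ‖x i‖ ^ 2 := by
  set i0 : Fin M := ⟨0, hM⟩ with hi0
  set T : ℝ := ∑ i, ‖x i‖ ^ 2 with hT
  have hTnn : 0 ≤ T := Finset.sum_nonneg fun i _ => by positivity
  have hf0 : (F i0 i0).re ≤ fplus := by
    have := hA2 i0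
    simpa [hi0, Real.one_rpow] using this
  -- diagonal entries are real and bounded by fplus
  have hdiag_abs : ∀ i : Fin M, ‖F i i‖ = (F i i).re := by
    intro i
    have h1 : (starRingEnd ℂ) (F i i) = F i i := hF.apply i i
    have h2 : ((F i i).re : ℂ) = F i i := (Complex.conj_eq_iff_re).mp h1
    have h3 := Complex.norm_real ((F i i).re)
    rw [h2] at h3
    rw [h3, Real.norm_eq_abs, abs_of_nonneg (hnonneg i)]
  have hdiag_le : ∀ i : Fin M, ‖F i i‖ ≤ fplus := by
    intro i
    rw [hdiag_abs i]
    exact le_trans (hmono i0 i (by simp [hi0, Fin.le_def])) hf0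
  -- sum of off-diagonal (upper) entries
  have hS : ∑ p ∈ Finset.univ.filter (fun p : Fin M × Fin M => p.1 < p.2),
      ‖F p.1 p.2‖ ≤ α * fplus := by
    have h1 := hA1 i0
    have h2 : Finset.univ.filter (fun p : Fin M × Fin M => i0 ≤ p.1 ∧ p.1 < p.2)
        = Finset.univ.filter (fun p : Fin M × Fin M => p.1 < p.2) := by
      apply Finset.filter_congr
      intro p _
      simp [hi0, Fin.le_def]
    rw [h2] at h1
    exact h1.trans (by nlinarith [hnonneg i0])
  -- pointwise pair bound
  set g : Fin M × Fin M → ℝ :=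
    fun p => ‖F p.1 p.2‖ * (‖x p.1‖ * ‖x p.2‖) with hg
  have step1 : ‖∑ i, star (x i) * ∑ j, F i j * x j‖
      ≤ ∑ p ∈ (univ : Finset (Fin M × Fin M)), g p := by
    rw [← Finset.univ_product_univ, Finset.sum_product]
    refine le_trans (norm_sum_le _ _) (Finset.sum_le_sum fun i _ => ?_)
    rw [norm_mul]
    have : ‖∑ j, F i j * x j‖ ≤ ∑ j, ‖F i j‖ * ‖x j‖ := by
      refine le_trans (norm_sum_le _ _) (Finset.sum_le_sum fun j _ => by rw [norm_mul])
    calc ‖star (x i)‖ * ‖∑ j, F i j * x j‖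
        ≤ ‖x i‖ * ∑ j, ‖F i j‖ * ‖x j‖ := by
          have hstar : ‖star (x i)‖ = ‖x i‖ := by
            simp
          rw [hstar]; exact mul_le_mul_of_nonneg_left this (by positivity)
      _ = ∑ j, g (i, j) := by
          rw [Finset.mul_sum]
          refine Finset.sum_congr rfl fun j _ => ?_
          simp only [hg]; ring
  -- split the sum
  have hsplit : ∑ p ∈ (univ : Finset (Fin M × Fin M)), g p
      = (∑ p ∈ univ.filter (fun p : Fin M × Fin M => p.1 = p.2), g p)
        + ((∑ p ∈ univ.filter (fun p : Fin M × Fin M => p.1 < p.2), g p)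
          + (∑ p ∈ univ.filter (fun p : Fin M × Fin M => p.2 < p.1), g p)) := by
    rw [← Finset.sum_filter_add_sum_filter_not univ (fun p : Fin M × Fin M => p.1 = p.2) g]
    congr 1
    rw [← Finset.sum_filter_add_sum_filter_not
      (univ.filter (fun p : Fin M × Fin M => ¬ p.1 = p.2)) (fun p => p.1 < p.2) g]
    congr 1
    · apply Finset.sum_congr _ (fun _ _ => rfl)
      rw [Finset.filter_filter]
      apply Finset.filter_congr; intro p _
      constructor
      · rintro ⟨_, h⟩; exact h
      · intro h; exact ⟨ne_of_lt h, h⟩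
    · apply Finset.sum_congr _ (fun _ _ => rfl)
      rw [Finset.filter_filter]
      apply Finset.filter_congr; intro p _
      constructor
      · rintro ⟨h1, h2⟩; rcases lt_or_gt_of_ne h1 with h | h
        · exact absurd h h2
        · exact h
      · intro h; exact ⟨(ne_of_lt h).symm, not_lt_of_gt h⟩
  -- diagonal part
  have hdiagsum : ∑ p ∈ univ.filter (fun p : Fin M × Fin M => p.1 = p.2), g p ≤ fplus * T := by
    rw [Finset.sum_filter, ← Finset.univ_product_univ, Finset.sum_product]
    have : ∀ i : Fin M, (∑ j, if i = j then g (i, j) else 0) = g (i, i) := fun i => by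
      rw [Finset.sum_ite_eq]; simp
    rw [Finset.sum_congr rfl fun i _ => this i, hT, Finset.mul_sum]
    refine Finset.sum_le_sum fun i _ => ?_
    have : g (i, i) = ‖F i i‖ * ‖x i‖ ^ 2 := by simp only [hg]; ring
    rw [this]
    exact mul_le_mul_of_nonneg_right (hdiag_le i) (by positivity)
  -- gt part equals lt part
  have hswap : ∑ p ∈ univ.filter (fun p : Fin M × Fin M => p.2 < p.1), g p
      = ∑ p ∈ univ.filter (fun p : Fin M × Fin M => p.1 < p.2), g p := by
    refine Finset.sum_nbij' (fun p => (p.2, p.1)) (fun p => (p.2, p.1)) ?_ ?_ ?_ ?_ ?_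
    · intro p hp; simp at hp ⊢; exact hp
    · intro p hp; simp at hp ⊢; exact hp
    · intro p _; rfl
    · intro p _; rfl
    · intro p _
      have habs : ‖F p.2 p.1‖ = ‖F p.1 p.2‖ := by
        rw [← hF.apply p.2 p.1]
        simp
      simp only [hg]
      rw [habs]; ring
  -- off-diagonal bound
  have hoff : (∑ p ∈ univ.filter (fun p : Fin M × Fin M => p.1 < p.2), g p)
      + (∑ p ∈ univ.filter (fun p : Fin M × Fin M => p.2 < p.1), g p) ≤ α * fplus * T := by
    rw [hswap, ← two_mul]
    have hbd : ∀ p ∈ univ.filter (fun p : Fin M × Fin M => p.1 < p.2),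
        2 * g p ≤ ‖F p.1 p.2‖ * T := by
      intro p hp
      simp only [Finset.mem_filter] at hp
      have hlt : p.1 < p.2 := hp.2
      have h2ab : 2 * (‖x p.1‖ * ‖x p.2‖)
          ≤ ‖x p.1‖ ^ 2 + ‖x p.2‖ ^ 2 := by nlinarith [sq_nonneg (‖x p.1‖ - ‖x p.2‖)]
      have hpair : ‖x p.1‖ ^ 2 + ‖x p.2‖ ^ 2 ≤ T := by
        have hp2 := Finset.sum_pair (f := fun i => ‖x i‖ ^ 2) (ne_of_lt hlt)
        rw [hT, ← hp2]
        exact Finset.sum_le_sum_of_subset_of_nonneg (Finset.subset_univ _)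
          (fun i _ _ => by positivity)
      calc 2 * g p = ‖F p.1 p.2‖ * (2 * (‖x p.1‖ * ‖x p.2‖)) := by
            rw [hg]; ring
        _ ≤ ‖F p.1 p.2‖ * T := by
            refine mul_le_mul_of_nonneg_left (h2ab.trans hpair) (by positivity)
    rw [Finset.mul_sum]
    calc (∑ p ∈ univ.filter (fun p : Fin M × Fin M => p.1 < p.2), 2 * g p)
        ≤ ∑ p ∈ univ.filter (fun p : Fin M × Fin M => p.1 < p.2), ‖F p.1 p.2‖ * T :=
          Finset.sum_le_sum hbd
      _ = (∑ p ∈ univ.filter (fun p : Fin M × Fin M => p.1 < p.2), ‖F p.1 p.2‖) * T := by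
          rw [Finset.sum_mul]
      _ ≤ α * fplus * T := mul_le_mul_of_nonneg_right hS hTnn
  calc ‖∑ i, star (x i) * ∑ j, F i j * x j‖
      ≤ ∑ p ∈ (univ : Finset (Fin M × Fin M)), g p := step1
    _ ≤ fplus * T + α * fplus * T := by rw [hsplit]; exact add_le_add hdiagsum hoff
    _ = (1 + α) * fplus * T := by ring

open Matrix

/-- Under (A1) and the power decay `f_i ≤ f₊ i^{-γ}` (γ > 1), the operator
norm of `F` is at most `(1+α) f₊`; in particular the spectral radius of `F` (the maximum
of the absolute values of its eigenvalues) is at most `ρ₊ := (1+α) f₊`. -/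
theorem opNorm_and_spectral_radius_bound {M : ℕ} (hM : 1 ≤ M)
    (F : Matrix (Fin M) (Fin M) ℂ) (hF : F.IsHermitian)
    (α fplus γ : ℝ) (hα : 0 < α) (hfplus : 0 < fplus) (hγ : 1 < γ)
    (hmono : ∀ i j : Fin M, i ≤ j → (F j j).re ≤ (F i i).re)
    (hnonneg : ∀ i : Fin M, 0 ≤ (F i i).re)
    (hA1 : ∀ i : Fin M,
      ∑ p ∈ Finset.univ.filter (fun p : Fin M × Fin M => i ≤ p.1 ∧ p.1 < p.2),
        ‖F p.1 p.2‖ ≤ α * (F i i).re)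
    (hA2 : ∀ i : Fin M, (F i i).re ≤ fplus * ((i : ℝ) + 1) ^ (-γ)) :
    l2OpNorm F ≤ (1 + α) * fplus
    ∧ ∀ i, |hF.eigenvalues i| ≤ (1 + α) * fplus := by
  have hC : (0:ℝ) ≤ (1 + α) * fplus := by positivity
  set C : ℝ := (1 + α) * fplus with hCdef
  have key : ∀ x : Fin M → ℂ,
      ‖∑ i, star (x i) * ∑ j, F i j * x j‖ ≤ C * ∑ i, ‖x i‖ ^ 2 :=
    fun x => quad_bound hM F hF α fplus γ hα hfplus hγ hmono hnonneg hA1 hA2 x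
  have heig : ∀ j, |hF.eigenvalues j| ≤ C := by
    intro j
    set v := hF.eigenvectorBasis j with hv
    have hnorm : ‖v‖ = 1 := hF.eigenvectorBasis.orthonormal.1 j
    have hsum : ∑ i, ‖v i‖ ^ 2 = 1 := by
      have h1 := EuclideanSpace.norm_eq v
      rw [hnorm] at h1
      have h2 : (0:ℝ) ≤ ∑ i, ‖v i‖ ^ 2 := Finset.sum_nonneg fun i _ => by positivity
      have h3 : ∑ i, ‖v i‖ ^ 2 = 1 := Real.sqrt_eq_one.mp h1.symm
      exact h3
    rw [hF.eigenvalues_eq j, ← hv]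
    have habs : ∀ z : ℂ, |RCLike.re z| ≤ ‖z‖ := fun z => by
      simpa using Complex.abs_re_le_norm z
    refine (habs _).trans ?_
    set w : Fin M → ℂ := (WithLp.equiv 2 _) v with hw
    have hz : dotProduct (star w) (F *ᵥ w) = ∑ i, star (w i) * ∑ k, F i k * w k := by
      simp [dotProduct, Matrix.mulVec]
    have hsum' : ∑ i, ‖w i‖ ^ 2 = 1 := hsum
    calc ‖dotProduct (star w) (F *ᵥ w)‖
        = ‖∑ i, star (w i) * ∑ k, F i k * w k‖ := by rw [hz]
      _ ≤ C * ∑ i, ‖w i‖ ^ 2 := key w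
      _ = C := by rw [hsum', mul_one]

  refine ⟨?_, heig⟩
  haveI : Nontrivial (EuclideanSpace ℂ (Fin M)) := by
    refine ⟨0, EuclideanSpace.single ⟨0, hM⟩ 1, fun h => ?_⟩
    have := congrArg (fun z => (z : EuclideanSpace ℂ (Fin M)) ⟨0, hM⟩) h
    simp [EuclideanSpace.single_apply] at this
  rw [l2OpNorm]
  set φ := Matrix.toEuclideanCLM (𝕜 := ℂ) (n := Fin M) with hφ
  set V : Matrix (Fin M) (Fin M) ℂ := ↑(hF.eigenvectorUnitary) with hVdef
  have hV : V ∈ unitary (Matrix (Fin M) (Fin M) ℂ) := hF.eigenvectorUnitary.2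
  set D : Matrix (Fin M) (Fin M) ℂ :=
    Matrix.diagonal (RCLike.ofReal ∘ hF.eigenvalues) with hDdef
  have hu : φ V ∈ unitary (EuclideanSpace ℂ (Fin M) →L[ℂ] EuclideanSpace ℂ (Fin M)) := by
    rw [Unitary.mem_iff]
    constructor
    · rw [← map_star φ, ← map_mul φ, (Unitary.mem_iff.mp hV).1, _root_.map_one]
    · rw [← map_star φ, ← map_mul φ, (Unitary.mem_iff.mp hV).2, _root_.map_one]
  have hDnorm : ‖φ D‖ ≤ C := by
    refine ContinuousLinearMap.opNorm_le_bound _ hC fun x => ?_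
    have hcoord : ∀ i : Fin M, (φ D x) i = (hF.eigenvalues i : ℂ) * x i := by
      intro i
      have h : φ D x = Matrix.toEuclideanLin D x := by
        rw [hφ, ← Matrix.coe_toEuclideanCLM_eq_toEuclideanLin]; rfl
      rw [h, Matrix.toEuclideanLin_apply]
      show (D *ᵥ (WithLp.equiv 2 _ x)) i = _
      rw [Matrix.mulVec_diagonal]
      rfl
    have h1 : ∀ i : Fin M, ‖(φ D x) i‖ ^ 2 ≤ C ^ 2 * ‖x i‖ ^ 2 := by
      intro i
      rw [hcoord i, norm_mul, mul_pow, Complex.norm_real, Real.norm_eq_abs]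
      have h2 := heig i
      have h3 := abs_nonneg (hF.eigenvalues i)
      have h4 : |hF.eigenvalues i| ^ 2 ≤ C ^ 2 := by nlinarith
      exact mul_le_mul_of_nonneg_right h4 (sq_nonneg _)
    rw [EuclideanSpace.norm_eq, EuclideanSpace.norm_eq]
    calc Real.sqrt (∑ i, ‖(φ D x) i‖ ^ 2)
        ≤ Real.sqrt (∑ i, C ^ 2 * ‖x i‖ ^ 2) :=
          Real.sqrt_le_sqrt (Finset.sum_le_sum fun i _ => h1 i)
      _ = C * Real.sqrt (∑ i, ‖x i‖ ^ 2) := by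
          rw [← Finset.mul_sum, Real.sqrt_mul (by positivity), Real.sqrt_sq hC]
  have hspec : F = V * D * star V := hF.spectral_theorem
  calc ‖φ F‖ = ‖φ V * φ D * star (φ V)‖ := by
        rw [hspec, _root_.map_mul, _root_.map_mul, map_star]
    _ = ‖φ D‖ := by
        rw [mul_assoc, CStarRing.norm_mem_unitary_mul _ hu,
          CStarRing.norm_mul_mem_unitary _ (Unitary.star_mem hu)]
    _ ≤ C := hDnorm
end

section
/- Let M ≥ 1, let F be an M×M Hermitian positive semidefinite complex matrix with eigenvalues λ_1, …, λ_M, let κ > 0, ρ_+ > 0 and γ > 1, and suppose that for every x > 0 the number N(x;F) of eigenvalues of F strictly greater than x satisfies N(x;F) ≤ ρ_+^{1/γ} x^{−1/γ}, and that λ_i ≤ ρ_+ for all i. Then Σ_{i=1}^M log₂(1 + κ M λ_i) ≤ ((κ ρ_+)^{1/γ} / ln 2) · M^{1/γ} · ∫_0^{κ ρ_+ M} x^{−1/γ} / (1 + x) dx. -/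
open scoped ComplexOrder
open MeasureTheory intervalIntegral Set

lemma integral_one_div_one_add {t : ℝ} (ht : 0 ≤ t) :
    ∫ x in (0:ℝ)..t, 1 / (1 + x) = Real.log (1 + t) := by
  calc ∫ x in (0:ℝ)..t, 1 / (1 + x)
      = ∫ x in (0:ℝ)..t, (fun y : ℝ => 1 / y) (x + 1) := by
        simp [add_comm]
    _ = ∫ y in (0+1:ℝ)..(t+1), 1 / y := integral_comp_add_right _ 1
    _ = Real.log ((t+1)/(0+1)) := by
        apply integral_one_div
        intro h
        rw [Set.mem_uIcc] at h
        rcases h with ⟨h1, _⟩ | ⟨_, h2⟩ <;> linarith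
    _ = Real.log (1 + t) := by norm_num [add_comm]

/-- If the counting function of the Hermitian PSD matrix `F` satisfies
`N(x;F) ≤ ρ₊^{1/γ} x^{-1/γ}` for all `x > 0` and all eigenvalues are at most `ρ₊`, then
`∑ᵢ log₂(1 + κ M λᵢ) ≤ ((κρ₊)^{1/γ}/ln 2) M^{1/γ} ∫₀^{κρ₊M} x^{-1/γ}/(1+x) dx`. -/
theorem capacity_le_integral_bound {M : ℕ} (hM : 1 ≤ M)
    (F : Matrix (Fin M) (Fin M) ℂ) (hF : F.PosSemidef)
    (κ ρplus γ : ℝ) (hκ : 0 < κ) (hρ : 0 < ρplus) (hγ : 1 < γ)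
    (hcount : ∀ x : ℝ, 0 < x →
      ((Finset.univ.filter (fun i => x < hF.1.eigenvalues i)).card : ℝ)
        ≤ ρplus ^ (1/γ) * x ^ (-1/γ))
    (hbound : ∀ i, hF.1.eigenvalues i ≤ ρplus) :
    ∑ i, Real.logb 2 (1 + κ * M * hF.1.eigenvalues i)
      ≤ (κ * ρplus) ^ (1/γ) / Real.log 2 * (M : ℝ) ^ (1/γ)
          * ∫ x in (0:ℝ)..(κ * ρplus * M), x ^ (-1/γ) / (1 + x) := by
  have hlog2 : 0 < Real.log 2 := Real.log_pos (by norm_num)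
  have hγpos : 0 < γ := lt_trans one_pos hγ
  set lam : Fin M → ℝ := hF.1.eigenvalues with hlamdef
  have hlam0 : ∀ i, 0 ≤ lam i := hF.eigenvalues_nonneg
  have hMpos : (0:ℝ) < M := by exact_mod_cast hM
  set T : ℝ := κ * ρplus * M with hTdef
  have hTpos : 0 < T := by positivity
  have hκM : 0 < κ * M := by positivity
  set t : Fin M → ℝ := fun i => κ * ↑M * lam i with htdef
  have ht0 : ∀ i, 0 ≤ t i := fun i => by have := hlam0 i; positivity
  have htT : ∀ i, t i ≤ T := by
    intro i
    have h1 : κ * ↑M * lam i ≤ κ * ↑M * ρplus :=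
      mul_le_mul_of_nonneg_left (hbound i) hκM.le
    calc t i ≤ κ * ↑M * ρplus := h1
      _ = T := by rw [hTdef]; ring
  -- the integrand family
  set f : Fin M → ℝ → ℝ :=
    fun i => Set.indicator (Set.Iio (t i)) (fun x => 1 / (1 + x)) with hfdef
  have hcont : ContinuousOn (fun x : ℝ => 1 / (1 + x)) (Set.uIcc 0 T) := by
    apply ContinuousOn.div continuousOn_const (by fun_prop)
    intro x hx
    rw [Set.uIcc_of_le hTpos.le] at hx
    have := hx.1; positivity
  have hcontInt : IntervalIntegrable (fun x : ℝ => 1 / (1 + x)) volume 0 T :=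
    hcont.intervalIntegrable
  have hfint : ∀ i, IntervalIntegrable (f i) volume 0 T := by
    intro i
    rw [intervalIntegrable_iff] at hcontInt ⊢
    exact hcontInt.indicator measurableSet_Iio
  have hfnonneg : ∀ i, ∀ x ∈ Set.Icc (0:ℝ) T, 0 ≤ f i x := by
    intro i x hx
    show 0 ≤ Set.indicator (Set.Iio (t i)) (fun x => 1 / (1 + x)) x
    rw [Set.indicator_apply]
    split
    · have := hx.1; positivity
    · exact le_refl 0
  -- Step 1: per-eigenvalue bound
  have key : ∀ i, Real.log (1 + t i) ≤ ∫ x in (0:ℝ)..T, f i x := by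
    intro i
    have hint1 : IntervalIntegrable (f i) volume 0 (t i) :=
      (hfint i).mono_set (by
        rw [Set.uIcc_of_le (ht0 i), Set.uIcc_of_le hTpos.le]
        exact Set.Icc_subset_Icc le_rfl (htT i))
    have hint2 : IntervalIntegrable (f i) volume (t i) T :=
      (hfint i).mono_set (by
        rw [Set.uIcc_of_le (htT i), Set.uIcc_of_le hTpos.le]
        exact Set.Icc_subset_Icc (ht0 i) le_rfl)
    have hsplit : ∫ x in (0:ℝ)..T, f i x
        = (∫ x in (0:ℝ)..(t i), f i x) + ∫ x in (t i)..T, f i x :=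
      (integral_add_adjacent_intervals hint1 hint2).symm
    have h2 : 0 ≤ ∫ x in (t i)..T, f i x := by
      apply intervalIntegral.integral_nonneg (htT i)
      intro x hx
      show 0 ≤ Set.indicator (Set.Iio (t i)) (fun x => 1 / (1 + x)) x
      rw [Set.indicator_apply]
      split
      · next h =>
          rw [Set.mem_Iio] at h
          exact absurd (lt_of_le_of_lt hx.1 h) (lt_irrefl _)
      · exact le_rfl
    have h1 : (∫ x in (0:ℝ)..(t i), f i x) = ∫ x in (0:ℝ)..(t i), 1 / (1 + x) := by
      apply intervalIntegral.integral_congr_ae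
      have hne : ∀ᵐ x : ℝ, x ≠ t i := by
        rw [MeasureTheory.ae_iff]
        have h : {x : ℝ | ¬ x ≠ t i} = {t i} := by ext x; simp
        rw [h]
        exact measure_singleton _
      filter_upwards [hne] with x hx hmem
      rw [Set.uIoc_of_le (ht0 i), Set.mem_Ioc] at hmem
      show Set.indicator (Set.Iio (t i)) (fun x => 1 / (1 + x)) x = 1 / (1 + x)
      rw [Set.indicator_of_mem]
      exact Set.mem_Iio.mpr (lt_of_le_of_ne hmem.2 hx)
    calc Real.log (1 + t i) = ∫ x in (0:ℝ)..(t i), 1 / (1 + x) :=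
          (integral_one_div_one_add (ht0 i)).symm
      _ = ∫ x in (0:ℝ)..(t i), f i x := h1.symm
      _ ≤ ∫ x in (0:ℝ)..T, f i x := by rw [hsplit]; linarith
  -- Step 2: sum and swap
  have hswap : ∑ i, ∫ x in (0:ℝ)..T, f i x = ∫ x in (0:ℝ)..T, ∑ i, f i x :=
    (intervalIntegral.integral_finset_sum (fun i _ => hfint i)).symm
  -- Step 3: integrand bound
  set C : ℝ := ρplus ^ (1/γ) * (κ * ↑M) ^ (1/γ) with hCdef
  set g : ℝ → ℝ := fun x => C * (x ^ (-1/γ) * (1 / (1 + x))) with hgdef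
  have hrint : IntervalIntegrable (fun x : ℝ => x ^ (-1/γ)) volume 0 T := by
    apply intervalIntegrable_rpow'
    rw [neg_div]
    have : 1/γ < 1 := (div_lt_one hγpos).mpr hγ
    linarith
  have hgint : IntervalIntegrable g volume 0 T :=
    (hrint.mul_continuousOn hcont).const_mul C
  have hptwise : ∀ x ∈ Set.Icc (0:ℝ) T, x ≠ 0 → (∑ i, f i x) ≤ g x := by
    intro x hx hx0
    have hxpos : 0 < x := lt_of_le_of_ne hx.1 (Ne.symm hx0)
    have h1x : (0:ℝ) < 1 + x := by linarith
    have hsum_eq : (∑ i, f i x)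
        = ((Finset.univ.filter (fun i => x / (κ * ↑M) < lam i)).card : ℝ) * (1 / (1 + x)) := by
      have : ∀ i, f i x = if x / (κ * ↑M) < lam i then 1 / (1 + x) else 0 := by
        intro i
        show Set.indicator (Set.Iio (t i)) (fun x => 1 / (1 + x)) x = _
        rw [Set.indicator_apply]
        congr 1
        simp only [Set.mem_Iio, htdef, eq_iff_iff]
        rw [div_lt_iff₀ hκM, mul_comm (lam i)]
      rw [Finset.sum_congr rfl (fun i _ => this i), Finset.sum_ite,
        Finset.sum_const, Finset.sum_const_zero, add_zero, nsmul_eq_mul]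
    have hdivpos : 0 < x / (κ * ↑M) := div_pos hxpos hκM
    have hc := hcount (x / (κ * ↑M)) hdivpos
    have hrw : (x / (κ * ↑M)) ^ (-1/γ) = x ^ (-1/γ) * (κ * ↑M) ^ (1/γ) := by
      rw [Real.div_rpow hxpos.le hκM.le, neg_div, Real.rpow_neg hκM.le, div_eq_mul_inv, inv_inv]
    rw [hsum_eq, hgdef]
    calc ((Finset.univ.filter (fun i => x / (κ * ↑M) < lam i)).card : ℝ) * (1 / (1 + x))
        ≤ (ρplus ^ (1/γ) * (x / (κ * ↑M)) ^ (-1/γ)) * (1 / (1 + x)) :=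
          mul_le_mul_of_nonneg_right hc (by positivity)
      _ = C * (x ^ (-1/γ) * (1 / (1 + x))) := by rw [hrw, hCdef]; ring
  -- Step 4: compare integrals
  have hsum_int : ∫ x in (0:ℝ)..T, (∑ i, f i x) ≤ ∫ x in (0:ℝ)..T, g x := by
    have hsint : IntervalIntegrable (fun x => ∑ i, f i x) volume 0 T := by
      have h' := IntervalIntegrable.sum Finset.univ (fun i _ => hfint i)
      convert h' using 1
      · rfl
      ext x
      simp
    apply intervalIntegral.integral_mono_ae_restrict hTpos.le hsint hgint
    have hmem : ∀ᵐ x ∂(volume.restrict (Set.Icc (0:ℝ) T)), x ∈ Set.Icc (0:ℝ) T :=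
      ae_restrict_mem measurableSet_Icc
    have hne0 : ∀ᵐ x ∂(volume.restrict (Set.Icc (0:ℝ) T)), x ≠ (0:ℝ) := by
      apply Filter.Eventually.filter_mono (MeasureTheory.ae_mono Measure.restrict_le_self)
      rw [MeasureTheory.ae_iff]
      have h : {x : ℝ | ¬ x ≠ 0} = {0} := by ext x; simp
      rw [h]
      exact measure_singleton _
    filter_upwards [hmem, hne0] with x h1 h2
    exact hptwise x h1 h2
  have hgval : (∫ x in (0:ℝ)..T, g x) = C * ∫ x in (0:ℝ)..T, x ^ (-1/γ) / (1 + x) := by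
    rw [hgdef]
    rw [intervalIntegral.integral_const_mul]
    congr 1
    apply intervalIntegral.integral_congr
    intro x _
    simp only [mul_one_div]
  -- Step 5: assemble
  have hC : (κ * ρplus) ^ (1/γ) * (M:ℝ) ^ (1/γ) = C := by
    rw [hCdef, Real.mul_rpow hκ.le hρ.le, Real.mul_rpow hκ.le (Nat.cast_nonneg M)]
    ring
  have hfinal : ∑ i, Real.log (1 + t i) ≤ C * ∫ x in (0:ℝ)..T, x ^ (-1/γ) / (1 + x) := by
    calc ∑ i, Real.log (1 + t i) ≤ ∑ i, ∫ x in (0:ℝ)..T, f i x :=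
          Finset.sum_le_sum (fun i _ => key i)
      _ = ∫ x in (0:ℝ)..T, (∑ i, f i x) := hswap
      _ ≤ ∫ x in (0:ℝ)..T, g x := hsum_int
      _ = C * ∫ x in (0:ℝ)..T, x ^ (-1/γ) / (1 + x) := hgval
  calc ∑ i, Real.logb 2 (1 + κ * ↑M * lam i)
      = (∑ i, Real.log (1 + t i)) / Real.log 2 := by
        rw [Finset.sum_div]
        exact Finset.sum_congr rfl (fun i _ => by rw [Real.logb])
    _ ≤ (C * ∫ x in (0:ℝ)..T, x ^ (-1/γ) / (1 + x)) / Real.log 2 := by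
        gcongr
    _ = (κ * ρplus) ^ (1/γ) / Real.log 2 * (M : ℝ) ^ (1/γ)
          * ∫ x in (0:ℝ)..T, x ^ (-1/γ) / (1 + x) := by
        rw [← hC]; ring
end

section
/- Let M ≥ 1 and let F be an M×M Hermitian complex matrix whose diagonal entries f_i := F_{i,i} satisfy f_1 ≥ f_2 ≥ … ≥ f_M ≥ 0. Suppose (A1'): there is α > 0 such that for each i₀ = 0,…,M−1 the off-diagonal part of the trailing block F̃^{(i₀)} := (F_{i,j})_{i₀+1 ≤ i,j ≤ M} has operator norm at most α f_{i₀+1}. Suppose also (A2'): there is a function f : [1,∞) → [0,∞), continuous and decreasing, with f_i ≤ f(i) for all i = 1,…,M. Then for every x > 0 and every real y ≥ 1 such that (1+α) f(y) ≤ x, one has N(x;F) ≤ min(M, y). -/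
/-- The trailing block `F̃^{(i₀)} = (F_{i,j})_{i₀+1 ≤ i,j ≤ M}` obtained by deleting the
first `i₀` rows and columns of `F` (0-based indexing). -/
noncomputable def trailingBlock {M : ℕ} (F : Matrix (Fin M) (Fin M) ℂ) (i₀ : ℕ) :
    Matrix (Fin (M - i₀)) (Fin (M - i₀)) ℂ :=
  fun i j => F ⟨i₀ + i.1, by have := i.isLt; omega⟩ ⟨i₀ + j.1, by have := j.isLt; omega⟩

private theorem sum_tail' {β : Type*} [AddCommMonoid β] {M k : ℕ} (hk : k ≤ M) (g : Fin M → β)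
    (hg : ∀ p : Fin M, p.1 < k → g p = 0) :
    ∑ p, g p = ∑ i : Fin (M - k), g ⟨k + i.1, by omega⟩ := by
  set G : ℕ → β := fun n => if h : n < M then g ⟨n, h⟩ else 0 with hG
  have h1 : ∑ p : Fin M, g p = ∑ n ∈ Finset.range M, G n := by
    rw [← Fin.sum_univ_eq_sum_range]
    exact Finset.sum_congr rfl fun i _ => by simp [hG, i.isLt]
  have h2 : ∑ i : Fin (M - k), g ⟨k + i.1, by omega⟩
      = ∑ n ∈ Finset.range (M - k), G (k + n) := by
    rw [← Fin.sum_univ_eq_sum_range (fun n => G (k + n))]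
    refine Finset.sum_congr rfl fun i _ => ?_
    have : k + i.1 < M := by omega
    simp [hG, this]
  have h0 : ∑ i ∈ Finset.Ico 0 k, G i = 0 := by
    refine Finset.sum_eq_zero fun n hn => ?_
    simp only [Finset.mem_Ico] at hn
    have hnM : n < M := lt_of_lt_of_le hn.2 hk
    simp [hG, hnM, hg ⟨n, hnM⟩ hn.2]
  rw [h1, h2, ← Finset.sum_Ico_eq_sum_range,
    Finset.range_eq_Ico, ← Finset.sum_Ico_consecutive _ (Nat.zero_le k) hk, h0, zero_add]

private theorem euclidean_inner_eq {n : Type*} [Fintype n] (u t : EuclideanSpace ℂ n) :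
    inner (𝕜 := ℂ) u t = ∑ p, (starRingEnd ℂ) (u p) * t p := by
  simp [PiLp.inner_apply, RCLike.inner_apply]
  exact Finset.sum_congr rfl fun _ _ => mul_comm _ _

private theorem conj_mul_re (z : ℂ) : ((starRingEnd ℂ) z * z).re = Complex.normSq z := by
  simp [Complex.mul_re, Complex.normSq_apply]

/-- Under (A1') (operator-norm bounds on the off-diagonal parts of the
trailing blocks) and (A2') (domination of the diagonal by a continuous decreasing
function `f` on `[1,∞)` with nonnegative values), for every `x > 0` and every `y ≥ 1`
with `(1+α) f(y) ≤ x`, the number of eigenvalues of `F` strictly greater than `x` is at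
most `min (M, y)`. -/
theorem counting_bound_general {M : ℕ} (hM : 1 ≤ M)
    (F : Matrix (Fin M) (Fin M) ℂ) (hF : F.IsHermitian)
    (α : ℝ) (hα : 0 < α)
    (hmono : ∀ i j : Fin M, i ≤ j → (F j j).re ≤ (F i i).re)
    (hnonneg : ∀ i : Fin M, 0 ≤ (F i i).re)
    (hA1' : ∀ (i₀ : ℕ) (hi₀ : i₀ < M),
      l2OpNorm (trailingBlock F i₀
          - Matrix.diagonal (fun i => trailingBlock F i₀ i i))
        ≤ α * (F ⟨i₀, hi₀⟩ ⟨i₀, hi₀⟩).re)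
    (f : ℝ → ℝ)
    (hfcont : ContinuousOn f (Set.Ici (1:ℝ)))
    (hfanti : AntitoneOn f (Set.Ici (1:ℝ)))
    (hfnonneg : ∀ t : ℝ, 1 ≤ t → 0 ≤ f t)
    (hA2' : ∀ i : Fin M, (F i i).re ≤ f ((i : ℝ) + 1))
    (x : ℝ) (hx : 0 < x) (y : ℝ) (hy : 1 ≤ y) (hxy : (1 + α) * f y ≤ x) :
    ((Finset.univ.filter (fun i => x < hF.eigenvalues i)).card : ℝ)
      ≤ min (M : ℝ) y := by
  classical
  set T := Finset.univ.filter (fun i => x < hF.eigenvalues i) with hT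
  have hcardM : T.card ≤ M := le_trans (Finset.card_filter_le _ _) (by simp)
  set k := min (Nat.floor y) M with hkdef
  have hky : (k : ℝ) ≤ y := by
    have h1 : (k : ℝ) ≤ (⌊y⌋₊ : ℝ) := Nat.cast_le.mpr (min_le_left _ _)
    exact h1.trans (Nat.floor_le (by linarith))
  have hmain : T.card ≤ k := by
    rcases lt_or_ge k M with hkM | hkM
    case inr => exact hcardM.trans hkM
    -- main case
    by_contra hNk
    push_neg at hNk
    have hkfloor : k = ⌊y⌋₊ := by
      rcases min_cases (Nat.floor y) M with h | h
      · exact h.1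
      · omega
    set b := hF.eigenvectorBasis with hb
    set lam := hF.eigenvalues with hlam
    set fk := (F ⟨k, hkM⟩ ⟨k, hkM⟩).re with hfk
    have hfk0 : 0 ≤ fk := hnonneg _
    have hfky : fk ≤ f y := by
      have h1 : fk ≤ f ((k : ℝ) + 1) := hA2' ⟨k, hkM⟩
      have h2 : y ≤ (k : ℝ) + 1 := by
        rw [hkfloor]
        exact le_of_lt (Nat.lt_floor_add_one y)
      refine h1.trans (hfanti ?_ ?_ h2)
      · exact Set.mem_Ici.mpr hy
      · exact Set.mem_Ici.mpr (by have : (0:ℝ) ≤ (k:ℝ) := Nat.cast_nonneg k; linarith)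
    have hxk : (1 + α) * fk ≤ x :=
      le_trans (mul_le_mul_of_nonneg_left hfky (by linarith)) hxy
    -- the linear map evaluating at the first k coordinates
    set L : (↥T → ℂ) →ₗ[ℂ] (Fin k → ℂ) :=
      { toFun := fun c j => ∑ i : ↥T, c i * b i.1 (Fin.castLE hkM.le j)
        map_add' := by
          intro c d; funext j
          simp [add_mul, Finset.sum_add_distrib]
        map_smul' := by
          intro a c; funext j
          simp [Finset.mul_sum, mul_assoc] } with hL
    have hker : LinearMap.ker L ≠ ⊥ := by
      apply LinearMap.ker_ne_bot_of_finrank_lt (K := ℂ)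
      rw [Module.finrank_fintype_fun_eq_card, Module.finrank_fintype_fun_eq_card,
        Fintype.card_coe, Fintype.card_fin]
      exact hNk
    obtain ⟨c, hcker, hc0⟩ := (Submodule.ne_bot_iff _).mp hker
    set l : Fin M → ℂ := fun i => if h : i ∈ T then c ⟨i, h⟩ else 0 with hl
    have hsum_l : ∀ q : Fin M → ℂ, ∑ i : ↥T, c i * q i.1 = ∑ i : Fin M, l i * q i := by
      intro q
      calc ∑ i : ↥T, c i * q i.1 = ∑ i : ↥T, l i.1 * q i.1 :=
            Finset.sum_congr rfl fun i _ => by simp [hl, i.2]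
        _ = ∑ i ∈ T, l i * q i := Finset.sum_coe_sort T (fun i => l i * q i)
        _ = ∑ i : Fin M, l i * q i :=
            Finset.sum_subset (Finset.subset_univ T) (fun i _ hi => by simp [hl, hi])
    set v : EuclideanSpace ℂ (Fin M) := ∑ i : Fin M, l i • (b i : EuclideanSpace ℂ (Fin M))
      with hv
    have hvp : ∀ p : Fin M, v p = ∑ i : Fin M, l i * b i p := by
      intro p
      rw [hv, WithLp.ofLp_sum, Finset.sum_apply p Finset.univ (fun i => (l i • (b i : EuclideanSpace ℂ (Fin M))).ofLp)]
      rfl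
    have hvzero : ∀ p : Fin M, p.1 < k → v p = 0 := by
      intro p hp
      have hker0 : L c = 0 := hcker
      have := congrFun hker0 ⟨p.1, hp⟩
      simp only [hL, LinearMap.coe_mk, AddHom.coe_mk, Pi.zero_apply] at this
      rw [hvp]
      have hcast : Fin.castLE hkM.le (⟨p.1, hp⟩ : Fin k) = p := by
        ext; rfl
      rw [← hcast, ← hsum_l (fun i => b i (Fin.castLE hkM.le ⟨p.1, hp⟩))]
      exact this
    set G := Matrix.toEuclideanCLM (𝕜 := ℂ) F with hG
    have hGb : ∀ i : Fin M, G (b i) = (lam i : ℂ) • (b i : EuclideanSpace ℂ (Fin M)) := by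
      intro i
      ext j
      have := congrFun (hF.mulVec_eigenvectorBasis i) j
      simpa [hG, hb, hlam] using this
    have hGv : G v = ∑ i : Fin M, (l i * (lam i : ℂ)) • (b i : EuclideanSpace ℂ (Fin M)) := by
      rw [hv, map_sum]
      refine Finset.sum_congr rfl fun i _ => ?_
      rw [map_smul, hGb i, smul_smul]
    have horth : Orthonormal ℂ (fun i => (b i : EuclideanSpace ℂ (Fin M))) := b.orthonormal
    have hinner1 : inner (𝕜 := ℂ) v (G v)
        = ∑ i : Fin M, (starRingEnd ℂ) (l i) * (l i * (lam i : ℂ)) := by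
      rw [hv, hGv]
      exact horth.inner_sum l (fun i => l i * (lam i : ℂ)) Finset.univ
    have hinner_self : inner (𝕜 := ℂ) v v
        = ∑ i : Fin M, (starRingEnd ℂ) (l i) * l i := by
      rw [hv]
      exact horth.inner_sum l l Finset.univ
    set W : ℝ := ∑ i : Fin M, Complex.normSq (l i) with hW
    have hreVV : (inner (𝕜 := ℂ) v v).re = W := by
      rw [hinner_self, Complex.re_sum, hW]
      exact Finset.sum_congr rfl fun i _ => conj_mul_re (l i)
    have hreVGv : (inner (𝕜 := ℂ) v (G v)).re = ∑ i : Fin M, Complex.normSq (l i) * lam i := by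
      rw [hinner1, Complex.re_sum]
      refine Finset.sum_congr rfl fun i _ => ?_
      have : (starRingEnd ℂ) (l i) * (l i * (lam i : ℂ))
          = ((Complex.normSq (l i) * lam i : ℝ) : ℂ) := by
        rw [← mul_assoc, mul_comm ((starRingEnd ℂ) (l i)) (l i), Complex.mul_conj]
        push_cast
        ring
      rw [this, Complex.ofReal_re]
    -- strict lower bound
    have hlower : x * W < (inner (𝕜 := ℂ) v (G v)).re := by
      rw [hreVGv, hW, Finset.mul_sum]
      refine Finset.sum_lt_sum ?_ ?_
      · intro i _
        by_cases hi : i ∈ T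
        · have hxi : x < lam i := (Finset.mem_filter.mp hi).2
          have h0 : 0 ≤ Complex.normSq (l i) := Complex.normSq_nonneg _
          rw [mul_comm]
          exact mul_le_mul_of_nonneg_left hxi.le h0
        · simp [hl, hi]
      · obtain ⟨i₀, hi₀⟩ := Function.ne_iff.mp hc0
        refine ⟨i₀.1, Finset.mem_univ _, ?_⟩
        have hli₀ : l i₀.1 = c i₀ := by simp [hl, i₀.2]
        have hne : l i₀.1 ≠ 0 := by rw [hli₀]; simpa using hi₀
        have hpos : 0 < Complex.normSq (l i₀.1) := Complex.normSq_pos.mpr hne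
        have hxi : x < lam i₀.1 := (Finset.mem_filter.mp i₀.2).2
        rw [mul_comm]
        exact mul_lt_mul_of_pos_left hxi hpos
    -- upper bound
    set e : Fin (M - k) → Fin M := fun i => ⟨k + i.1, by omega⟩ with he
    set w : EuclideanSpace ℂ (Fin (M - k)) := WithLp.toLp 2 (fun i => v (e i)) with hw
    set O := trailingBlock F k - Matrix.diagonal (fun i => trailingBlock F k i i) with hO
    set GO := Matrix.toEuclideanCLM (𝕜 := ℂ) O with hGO
    have hWw : (inner (𝕜 := ℂ) w w).re = W := by
      have h1 : (inner (𝕜 := ℂ) v v).re = ∑ p : Fin M, Complex.normSq (v p) := by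
        rw [euclidean_inner_eq v v, Complex.re_sum]
        exact Finset.sum_congr rfl fun p _ => conj_mul_re (v p)
      have h2 : (inner (𝕜 := ℂ) w w).re = ∑ i : Fin (M - k), Complex.normSq (w i) := by
        rw [euclidean_inner_eq w w, Complex.re_sum]
        exact Finset.sum_congr rfl fun p _ => conj_mul_re (w p)
      have h3 : ∑ p : Fin M, Complex.normSq (v p)
          = ∑ i : Fin (M - k), Complex.normSq (v ⟨k + i.1, by omega⟩) := by
        refine sum_tail' hkM.le _ fun p hp => ?_
        rw [hvzero p hp]; simp
      rw [h2, ← hreVV, h1, h3]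
    have hW0 : 0 ≤ W := Finset.sum_nonneg fun i _ => Complex.normSq_nonneg _
    have hnw : ‖w‖ * ‖w‖ = W := by
      rw [← hWw]
      exact (inner_self_eq_norm_mul_norm (𝕜 := ℂ) w).symm
    -- expression of the quadratic form through the trailing block
    have hqf : inner (𝕜 := ℂ) v (G v)
        = inner (𝕜 := ℂ) w (GO w)
          + ∑ i : Fin (M - k), ((Complex.normSq (w i) : ℂ)) * F (e i) (e i) := by
      have hGvp : ∀ p : Fin M, (G v) p = ∑ q : Fin M, F p q * v q := fun p => rfl
      have step1 : inner (𝕜 := ℂ) v (G v)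
          = ∑ p : Fin M, (starRingEnd ℂ) (v p) * ∑ q : Fin M, F p q * v q := by
        rw [euclidean_inner_eq v (G v)]
        exact Finset.sum_congr rfl fun p _ => by rw [hGvp p]
      have step2 : ∑ p : Fin M, (starRingEnd ℂ) (v p) * ∑ q : Fin M, F p q * v q
          = ∑ i : Fin (M - k), (starRingEnd ℂ) (w i)
              * ∑ j : Fin (M - k), F (e i) (e j) * w j := by
        rw [sum_tail' hkM.le _ (fun p hp => by rw [hvzero p hp]; simp)]
        refine Finset.sum_congr rfl fun i _ => ?_
        congr 1
        exact sum_tail' hkM.le _ (fun q hq => by rw [hvzero q hq]; simp)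
      have step3 : ∀ i j : Fin (M - k), F (e i) (e j)
          = O i j + Matrix.diagonal (fun i => trailingBlock F k i i) i j := by
        intro i j
        rw [hO]
        simp [trailingBlock, he]
      rw [step1, step2]
      have step4 : ∀ i : Fin (M - k),
          (starRingEnd ℂ) (w i) * ∑ j : Fin (M - k), F (e i) (e j) * w j
          = (starRingEnd ℂ) (w i) * (GO w) i
            + ((Complex.normSq (w i) : ℂ)) * F (e i) (e i) := by
        intro i
        have hrow : ∑ j : Fin (M - k), F (e i) (e j) * w j
            = (GO w) i + trailingBlock F k i i * w i := by
          have hGOw : (GO w) i = ∑ j : Fin (M - k), O i j * w j := rfl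
          rw [hGOw]
          have : ∑ j : Fin (M - k), F (e i) (e j) * w j
              = ∑ j : Fin (M - k),
                  (O i j * w j + Matrix.diagonal (fun i => trailingBlock F k i i) i j * w j) := by
            refine Finset.sum_congr rfl fun j _ => by rw [step3 i j]; ring
          rw [this, Finset.sum_add_distrib]
          congr 1
          have : ∑ j : Fin (M - k), Matrix.diagonal (fun i => trailingBlock F k i i) i j * w j
              = Matrix.mulVec (Matrix.diagonal (fun i => trailingBlock F k i i))
                  (fun j => w j) i := rfl
          rw [this, Matrix.mulVec_diagonal]
        rw [hrow]
        have hdiag : trailingBlock F k i i = F (e i) (e i) := by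
          simp [trailingBlock, he]
        rw [hdiag, mul_add]
        congr 1
        rw [← mul_assoc, mul_comm ((starRingEnd ℂ) (w i)) (F (e i) (e i)), mul_assoc,
          mul_comm ((starRingEnd ℂ) (w i)) (w i), Complex.mul_conj]
        ring
      rw [Finset.sum_congr rfl fun i _ => step4 i, Finset.sum_add_distrib,
        ← euclidean_inner_eq w (GO w)]
    have hupper : (inner (𝕜 := ℂ) v (G v)).re ≤ x * W := by
      have hterm2 : (∑ i : Fin (M - k),
          ((Complex.normSq (w i) : ℂ)) * F (e i) (e i)).re ≤ fk * W := by
        rw [Complex.re_sum]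
        have : ∀ i : Fin (M - k),
            (((Complex.normSq (w i) : ℂ)) * F (e i) (e i)).re
              ≤ Complex.normSq (w i) * fk := by
          intro i
          rw [Complex.re_ofReal_mul]
          have hle : (F (e i) (e i)).re ≤ fk := by
            rw [hfk]
            refine hmono ⟨k, hkM⟩ (e i) ?_
            simp [he, Fin.le_def]
          have h0 : 0 ≤ Complex.normSq (w i) := Complex.normSq_nonneg _
          exact mul_le_mul_of_nonneg_left hle h0
        calc ∑ i, (((Complex.normSq (w i) : ℂ)) * F (e i) (e i)).re
            ≤ ∑ i, Complex.normSq (w i) * fk := Finset.sum_le_sum fun i _ => this i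
          _ = (∑ i, Complex.normSq (w i)) * fk := by rw [← Finset.sum_mul]
          _ = fk * W := by
              rw [mul_comm]
              congr 1
              have h2 : (inner (𝕜 := ℂ) w w).re = ∑ i, Complex.normSq (w i) := by
                rw [euclidean_inner_eq w w, Complex.re_sum]
                exact Finset.sum_congr rfl fun p _ => conj_mul_re (w p)
              rw [← h2, hWw]
      have hterm1 : (inner (𝕜 := ℂ) w (GO w)).re ≤ (α * fk) * W := by
        have h1 : (inner (𝕜 := ℂ) w (GO w)).re ≤ ‖(inner (𝕜 := ℂ) w (GO w) : ℂ)‖ := by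
          exact Complex.re_le_norm _
        have h2 : ‖(inner (𝕜 := ℂ) w (GO w) : ℂ)‖ ≤ ‖w‖ * ‖GO w‖ := norm_inner_le_norm _ _
        have h3 : ‖GO w‖ ≤ ‖GO‖ * ‖w‖ := GO.le_opNorm w
        have h4 : ‖GO‖ ≤ α * fk := hA1' k hkM
        have hwnn : (0:ℝ) ≤ ‖w‖ := norm_nonneg _
        calc (inner (𝕜 := ℂ) w (GO w)).re ≤ ‖w‖ * ‖GO w‖ := h1.trans h2
          _ ≤ ‖w‖ * (‖GO‖ * ‖w‖) := mul_le_mul_of_nonneg_left h3 hwnn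
          _ = ‖GO‖ * (‖w‖ * ‖w‖) := by ring
          _ ≤ (α * fk) * (‖w‖ * ‖w‖) := by
              refine mul_le_mul_of_nonneg_right h4 (by positivity)
          _ = (α * fk) * W := by rw [hnw]
      calc (inner (𝕜 := ℂ) v (G v)).re
          = (inner (𝕜 := ℂ) w (GO w)).re
            + (∑ i : Fin (M - k), ((Complex.normSq (w i) : ℂ)) * F (e i) (e i)).re := by
            rw [hqf, Complex.add_re]
        _ ≤ (α * fk) * W + fk * W := add_le_add hterm1 hterm2
        _ = ((1 + α) * fk) * W := by ring
        _ ≤ x * W := mul_le_mul_of_nonneg_right hxk hW0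
    exact absurd (hlower.trans_le hupper) (lt_irrefl _)
  refine le_min ?_ ?_
  · exact_mod_cast hcardM
  · exact le_trans (by exact_mod_cast hmain) hky
end

section
/- Let M ≥ 1 and let F be an M×M Hermitian positive semidefinite complex matrix whose diagonal entries f_i := F_{i,i} satisfy f_1 ≥ f_2 ≥ … ≥ f_M ≥ 0 and assumption (A1) with constant α > 0, and suppose there are constants f_+ > 0 and γ > 0 such that f_i ≤ f_+ e^{−γ(i−1)} for all i = 1,…,M (exponential decay of the diagonal). Set ρ_+ := (1+α) f_+ and let κ > 0. Then the capacity C_M := Σ_{i=1}^M log₂(1 + κ M λ_i), where λ_1,…,λ_M are the eigenvalues of F, satisfies C_M ≤ ( γ^{−1} + ln(1 + κ ρ_+ M) + γ^{−1} (ln(1 + κ ρ_+ M))² ) / ln 2. -/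
open scoped ComplexOrder
open Matrix


lemma herm_trace_eq {n : Type*} [Fintype n] [DecidableEq n] {H : Matrix n n ℂ}
    (hH : H.IsHermitian) : H.trace = ∑ i, (hH.eigenvalues i : ℂ) := by
  conv_lhs => rw [hH.spectral_theorem, Unitary.conjStarAlgAut_apply]
  rw [Matrix.trace_mul_cycle,
    show (star (hH.eigenvectorUnitary : Matrix n n ℂ)) * (hH.eigenvectorUnitary : Matrix n n ℂ)
      = 1 from Matrix.mem_unitaryGroup_iff'.mp hH.eigenvectorUnitary.2,
    one_mul, Matrix.trace_diagonal]
  rfl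

lemma amgm_prod_le_one {n : ℕ} (hn : 0 < n) (z : Fin n → ℝ) (hz : ∀ i, 0 ≤ z i)
    (hsum : ∑ i, z i = n) : ∏ i, z i ≤ 1 := by
  have hn' : (0:ℝ) < n := by exact_mod_cast hn
  have hw : ∑ _i : Fin n, (n:ℝ)⁻¹ = 1 := by
    simp only [Finset.sum_const, Finset.card_univ, Fintype.card_fin, nsmul_eq_mul]
    field_simp
  have h := Real.geom_mean_le_arith_mean_weighted Finset.univ (fun _ => (n:ℝ)⁻¹) z
      (fun i _ => by positivity) hw (fun i _ => hz i)
  have hr : ∑ i, (n:ℝ)⁻¹ * z i = 1 := by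
    rw [← Finset.mul_sum, hsum]; field_simp
  rw [hr] at h
  have hprod : (∏ i, z i ^ ((n:ℝ)⁻¹)) ^ (n:ℝ) = ∏ i, z i := by
    rw [← Real.finset_prod_rpow _ _ (fun i _ => Real.rpow_nonneg (hz i) _) _]
    refine Finset.prod_congr rfl fun i _ => ?_
    rw [← Real.rpow_mul (hz i), inv_mul_cancel₀ hn'.ne', Real.rpow_one]
  calc ∏ i, z i = (∏ i, z i ^ ((n:ℝ)⁻¹)) ^ (n:ℝ) := hprod.symm
    _ ≤ 1 := Real.rpow_le_one
        (Finset.prod_nonneg fun i _ => Real.rpow_nonneg (hz i) _) h (by positivity)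

lemma hadamard_psd {n : ℕ} {G : Matrix (Fin n) (Fin n) ℂ} (hG : G.PosSemidef)
    (hd : ∀ i, 0 < (G i i).re) : (G.det).re ≤ ∏ i, (G i i).re := by
  rcases Nat.eq_zero_or_pos n with rfl | hn
  · simp [Matrix.det_fin_zero]
  set d : Fin n → ℝ := fun i => (G i i).re with hddef
  set b : Fin n → ℂ := fun i => (((Real.sqrt (d i))⁻¹ : ℝ) : ℂ) with hbdef
  set B : Matrix (Fin n) (Fin n) ℂ := Matrix.diagonal b with hBdef
  have hsb : star b = b := funext fun i => by simp [hbdef, Complex.conj_ofReal]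
  have hBH : Bᴴ = B := by
    rw [hBdef, Matrix.diagonal_conjTranspose, hsb]
  have hGd : ∀ i, G i i = ((d i : ℝ) : ℂ) := by
    intro i
    have h1 : star (G i i) = G i i := congrFun (congrFun hG.1 i) i
    have him : (G i i).im = 0 := by
      have := Complex.conj_eq_iff_im.mp h1
      exact this
    apply Complex.ext
    · simp [hddef]
    · simp [him]
  set H : Matrix (Fin n) (Fin n) ℂ := B * G * Bᴴ with hHdef
  have hHpsd : H.PosSemidef := hG.mul_mul_conjTranspose_same B
  have hsq : ∀ i, (b i) * (d i : ℂ) * (b i) = 1 := by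
    intro i
    have hs0 : Real.sqrt (d i) ≠ 0 := (Real.sqrt_pos.mpr (hd i)).ne'
    have hre : (((Real.sqrt (d i))⁻¹ * d i * (Real.sqrt (d i))⁻¹ : ℝ)) = 1 := by
      rw [show ((Real.sqrt (d i))⁻¹ * d i * (Real.sqrt (d i))⁻¹ : ℝ)
          = d i / (Real.sqrt (d i) * Real.sqrt (d i)) by ring,
        Real.mul_self_sqrt (hd i).le, div_self (hd i).ne']
    calc b i * (d i : ℂ) * b i
        = (((Real.sqrt (d i))⁻¹ * d i * (Real.sqrt (d i))⁻¹ : ℝ) : ℂ) := by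
          rw [hbdef]; push_cast; ring
      _ = 1 := by rw [hre]; norm_cast
  have hHdiag : ∀ i, H i i = 1 := by
    intro i
    have h1 : H i i = b i * (G i i * b i) := by
      rw [hHdef, hBH, hBdef, mul_assoc, Matrix.diagonal_mul, Matrix.mul_diagonal]
    rw [h1, hGd i]
    calc b i * ((d i : ℂ) * b i) = b i * (d i : ℂ) * b i := by ring
      _ = 1 := hsq i
  set μ : Fin n → ℝ := hHpsd.1.eigenvalues with hμdef
  have hμnn : ∀ i, 0 ≤ μ i := hHpsd.eigenvalues_nonneg
  have htr : H.trace = (n : ℂ) := by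
    rw [Matrix.trace]
    simp only [Matrix.diag_apply]
    rw [Finset.sum_congr rfl fun i _ => hHdiag i]
    simp
  have hμsum : ∑ i, μ i = n := by
    have h1 := herm_trace_eq hHpsd.1
    rw [htr] at h1
    have h2 : ((∑ i, μ i : ℝ) : ℂ) = ((n : ℝ) : ℂ) := by
      push_cast
      rw [← h1]
    exact_mod_cast h2
  have hμprod : ∏ i, μ i ≤ 1 := amgm_prod_le_one hn μ hμnn hμsum
  have hdetH : H.det = ((∏ i, μ i : ℝ) : ℂ) := by
    rw [hHpsd.1.det_eq_prod_eigenvalues]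
    push_cast
    rfl
  -- det H = (∏ (d i)⁻¹) * det G
  set r : ℝ := ∏ i, (Real.sqrt (d i))⁻¹ with hrdef
  have hdetB : B.det = ((r : ℝ) : ℂ) := by
    rw [hBdef, Matrix.det_diagonal, hrdef]
    simp only [hbdef]
    push_cast
    rfl
  have hr2 : r * r = ∏ i, (d i)⁻¹ := by
    rw [hrdef, ← Finset.prod_mul_distrib]
    refine Finset.prod_congr rfl fun i _ => ?_
    rw [← mul_inv, Real.mul_self_sqrt (hd i).le]
  have hdetfact : H.det = ((r * r : ℝ) : ℂ) * G.det := by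
    rw [hHdef, hBH, Matrix.det_mul, Matrix.det_mul, hdetB]
    push_cast
    ring
  have hGdet_re : (∏ i, (d i)⁻¹) * (G.det).re = ∏ i, μ i := by
    have h := hdetfact.symm.trans hdetH
    have h2 := congrArg Complex.re h
    rw [Complex.re_ofReal_mul, Complex.ofReal_re, hr2] at h2
    exact h2
  have hdpos : (0:ℝ) < ∏ i, d i := Finset.prod_pos fun i _ => hd i
  have hinv : (∏ i, (d i)⁻¹) = (∏ i, d i)⁻¹ := by
    rw [← Finset.prod_inv_distrib]
  rw [hinv] at hGdet_re
  have : (G.det).re = (∏ i, d i) * ∏ i, μ i := by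
    field_simp at hGdet_re
    nlinarith [hGdet_re, hdpos]
  rw [this]
  calc (∏ i, d i) * ∏ i, μ i ≤ (∏ i, d i) * 1 := by
        exact mul_le_mul_of_nonneg_left hμprod hdpos.le
    _ = ∏ i, (G i i).re := by rw [mul_one]

lemma psd_one_add_smul {n : ℕ} {F : Matrix (Fin n) (Fin n) ℂ} (hF : F.PosSemidef)
    {c : ℝ} (hc : 0 ≤ c) :
    ((1 : Matrix (Fin n) (Fin n) ℂ) + (c : ℂ) • F).PosSemidef := by
  refine Matrix.PosSemidef.add Matrix.PosSemidef.one ⟨?_, ?_⟩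
  · show ((c:ℂ) • F)ᴴ = (c:ℂ) • F
    rw [Matrix.conjTranspose_smul, hF.1.eq]
    congr 1
    simp [Complex.conj_ofReal]
  · intro x
    exact (hF.smul (Complex.zero_le_real.mpr hc)).2 x

lemma det_one_add_smul_herm {n : ℕ} {F : Matrix (Fin n) (Fin n) ℂ} (hF : F.IsHermitian)
    (c : ℝ) :
    ((1 : Matrix (Fin n) (Fin n) ℂ) + (c : ℂ) • F).det
      = (((∏ i, (1 + c * hF.eigenvalues i)) : ℝ) : ℂ) := by
  set U : Matrix (Fin n) (Fin n) ℂ := (hF.eigenvectorUnitary : Matrix (Fin n) (Fin n) ℂ) with hUdef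
  have hUU : U * star U = 1 := Matrix.mem_unitaryGroup_iff.mp hF.eigenvectorUnitary.2
  set D : Matrix (Fin n) (Fin n) ℂ :=
    Matrix.diagonal (fun i => (1 : ℂ) + (c : ℂ) * (hF.eigenvalues i : ℝ)) with hDdef
  have hD : D = 1 + (c:ℂ) • Matrix.diagonal (RCLike.ofReal ∘ hF.eigenvalues) := by
    rw [hDdef]
    ext i j
    rcases eq_or_ne i j with rfl | h
    · simp [Matrix.diagonal_apply_eq, Matrix.one_apply_eq, Function.comp]
    · simp [Matrix.diagonal_apply_ne _ h, Matrix.one_apply_ne h]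
  have key : (1 : Matrix (Fin n) (Fin n) ℂ) + (c : ℂ) • F = U * D * star U := by
    rw [hD, Matrix.mul_add, Matrix.add_mul, Matrix.mul_one, hUU, Matrix.mul_smul,
      Matrix.smul_mul]
    congr 1
    conv_lhs => rw [hF.spectral_theorem, Unitary.conjStarAlgAut_apply]
  rw [key, Matrix.det_mul, Matrix.det_mul]
  have hU1 : U.det * (star U).det = 1 := by
    rw [← Matrix.det_mul, hUU, Matrix.det_one]
  calc U.det * D.det * (star U).det = (U.det * (star U).det) * D.det := by ring
    _ = D.det := by rw [hU1, one_mul]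
    _ = (((∏ i, (1 + c * hF.eigenvalues i)) : ℝ) : ℂ) := by
        rw [hDdef, Matrix.det_diagonal]
        push_cast
        rfl


lemma sum_log_exp_decay_bound (A γ : ℝ) (hA : 0 < A) (hγ : 0 < γ) (M : ℕ) :
    ∑ i ∈ Finset.range M, Real.log (1 + A * Real.exp (-(γ * i))) ≤
      γ⁻¹ + Real.log (1 + A) + γ⁻¹ * (Real.log (1 + A)) ^ 2 := by
  set L := Real.log (1 + A) with hLdef
  have hL : 0 ≤ L := Real.log_nonneg (by linarith)
  set ℓ : ℝ → ℝ := fun t => Real.log (1 + A * Real.exp (-(γ * t))) with hldef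
  set φ : ℝ → ℝ := fun t => (ℓ t) ^ 2 / 2 + ℓ t with hphidef
  have hpos : ∀ t : ℝ, 0 < 1 + A * Real.exp (-(γ * t)) := by
    intro t; positivity
  have hlnn : ∀ t : ℝ, 0 ≤ ℓ t := by
    intro t
    apply Real.log_nonneg
    nlinarith [Real.exp_pos (-(γ * t)), hA.le, mul_nonneg hA.le (Real.exp_pos (-(γ * t))).le]
  have hanti : ∀ s t : ℝ, s ≤ t → ℓ t ≤ ℓ s := by
    intro s t hst
    apply Real.log_le_log (hpos t)
    have : Real.exp (-(γ * t)) ≤ Real.exp (-(γ * s)) := by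
      apply Real.exp_le_exp.mpr
      nlinarith
    nlinarith
  have hderiv : ∀ t : ℝ, HasDerivAt ℓ
      (A * Real.exp (-(γ * t)) * (-γ) / (1 + A * Real.exp (-(γ * t)))) t := by
    intro t
    have h1 : HasDerivAt (fun t : ℝ => -(γ * t)) (-γ) t := by
      exact (((hasDerivAt_id t).const_mul γ).neg).congr_deriv (by simp)
    have h2 : HasDerivAt (fun t : ℝ => 1 + A * Real.exp (-(γ * t)))
        (A * Real.exp (-(γ * t)) * (-γ)) t := by
      have := (h1.exp.const_mul A).const_add 1
      exact this.congr_deriv (by ring)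
    exact h2.log (hpos t).ne'
  have hderivphi : ∀ t : ℝ, HasDerivAt φ
      ((ℓ t + 1) * (A * Real.exp (-(γ * t)) * (-γ) / (1 + A * Real.exp (-(γ * t))))) t := by
    intro t
    have := (((hderiv t).pow 2).div_const 2).add (hderiv t)
    exact this.congr_deriv (by simp; ring)
  -- step inequality
  have hstep : ∀ i : ℕ, γ * ℓ (i + 1 : ℕ) ≤ φ (i : ℕ) - φ ((i + 1 : ℕ) : ℝ) := by
    intro i
    have hlt : (i : ℝ) < (i : ℝ) + 1 := by linarith
    obtain ⟨c, hc, hceq⟩ := exists_hasDerivAt_eq_slope φ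
      (fun t => (ℓ t + 1) * (A * Real.exp (-(γ * t)) * (-γ) / (1 + A * Real.exp (-(γ * t)))))
      hlt (fun t _ => (hderivphi t).continuousAt.continuousWithinAt)
      (fun t _ => hderivphi t)
    set s := A * Real.exp (-(γ * c)) with hsdef
    have hs : 0 < s := by positivity
    have hlc : ℓ c = Real.log (1 + s) := rfl
    have hkey : Real.log (1 + s) ≤ s := by
      have := Real.log_le_sub_one_of_pos (show (0:ℝ) < 1 + s by linarith)
      linarith
    have hone : ((i : ℝ) + 1) - i = 1 := by ring
    rw [hone, div_one] at hceq
    have hslope : φ (i:ℝ) - φ ((i:ℝ) + 1) = (ℓ c + 1) * (s * γ / (1 + s)) := by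
      linear_combination hceq
    have h1s : (0:ℝ) < 1 + s := by linarith
    have hmain : γ * ℓ c ≤ (ℓ c + 1) * (s * γ / (1 + s)) := by
      rw [hlc]
      have h2 : (Real.log (1+s) + 1) * (s * γ / (1 + s))
          = ((Real.log (1+s) + 1) * (s * γ)) / (1+s) := by ring
      rw [h2, le_div_iff₀ h1s]
      nlinarith [hkey, hγ.le, Real.log_nonneg (show (1:ℝ) ≤ 1+s by linarith),
        mul_nonneg (sub_nonneg.mpr hkey) hγ.le]
    have hcle : ℓ ((i:ℝ) + 1) ≤ ℓ c := hanti c ((i:ℝ)+1) hc.2.le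
    push_cast
    rw [hslope]
    calc γ * ℓ ((i:ℝ) + 1) ≤ γ * ℓ c := by nlinarith
      _ ≤ (ℓ c + 1) * (s * γ / (1 + s)) := hmain
  have hphinn : ∀ t : ℝ, 0 ≤ φ t := by
    intro t
    have := hlnn t
    simp only [hphidef]
    positivity
  have hl0 : ℓ 0 = L := by
    simp [hldef, hLdef]
  have htel : ∀ k : ℕ, ∑ i ∈ Finset.range k, γ * ℓ ((i + 1 : ℕ)) ≤ φ 0 := by
    intro k
    calc ∑ i ∈ Finset.range k, γ * ℓ ((i + 1 : ℕ))
        ≤ ∑ i ∈ Finset.range k, ((fun n : ℕ => φ n) i - (fun n : ℕ => φ n) (i + 1)) :=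
          Finset.sum_le_sum (fun i _ => hstep i)
      _ = φ (0 : ℕ) - φ (k : ℕ) := Finset.sum_range_sub' (fun n : ℕ => φ n) k
      _ ≤ φ 0 := by
          have := hphinn (k : ℕ)
          norm_num
          linarith
  have hsum : ∑ i ∈ Finset.range M, ℓ i ≤ L + γ⁻¹ * φ 0 := by
    rcases M with - | k
    · simp only [Finset.range_zero, Finset.sum_empty]
      have := hphinn 0
      positivity
    · rw [Finset.sum_range_succ']
      have h1 : ∑ i ∈ Finset.range k, ℓ ((i + 1 : ℕ)) ≤ γ⁻¹ * φ 0 := by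
        have h2 := htel k
        rw [← Finset.mul_sum] at h2
        rw [← le_div_iff₀' hγ] at h2
        rw [div_eq_inv_mul] at h2
        exact h2
      have hz : ℓ ((0:ℕ):ℝ) = L := by rw [Nat.cast_zero, hl0]
      rw [hz]
      linarith
  calc ∑ i ∈ Finset.range M, Real.log (1 + A * Real.exp (-(γ * i)))
      = ∑ i ∈ Finset.range M, ℓ i := rfl
    _ ≤ L + γ⁻¹ * φ 0 := hsum
    _ ≤ γ⁻¹ + L + γ⁻¹ * L ^ 2 := by
        have hφ0 : φ 0 = L ^ 2 / 2 + L := by rw [hphidef]; simp only []; rw [hl0]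
        rw [hφ0]
        have hinv : (0:ℝ) ≤ γ⁻¹ := (inv_pos.mpr hγ).le
        nlinarith [sq_nonneg (L - 1), mul_nonneg hinv (sq_nonneg (L - 1))]

/-- Under (A1) and exponential decay `f_i ≤ f₊ e^{-γ(i-1)}` of the diagonal
(γ > 0), the capacity `C_M = ∑ᵢ log₂(1 + κ M λᵢ)` is bounded by a polynomial in
`ln(1 + κ ρ₊ M)`, namely `(γ⁻¹ + ln(1+κρ₊M) + γ⁻¹ ln(1+κρ₊M)²)/ln 2` with `ρ₊=(1+α)f₊`. -/
theorem capacity_log_bound_exponential_decay {M : ℕ} (hM : 1 ≤ M)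
    (F : Matrix (Fin M) (Fin M) ℂ) (hF : F.PosSemidef)
    (α fplus γ κ : ℝ) (hα : 0 < α) (hfplus : 0 < fplus) (hγ : 0 < γ) (hκ : 0 < κ)
    (hmono : ∀ i j : Fin M, i ≤ j → (F j j).re ≤ (F i i).re)
    (hnonneg : ∀ i : Fin M, 0 ≤ (F i i).re)
    (hA1 : ∀ i : Fin M,
      ∑ p ∈ Finset.univ.filter (fun p : Fin M × Fin M => i ≤ p.1 ∧ p.1 < p.2),
        ‖F p.1 p.2‖ ≤ α * (F i i).re)
    (hA2 : ∀ i : Fin M, (F i i).re ≤ fplus * Real.exp (-γ * (i : ℝ))) :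
    ∑ i, Real.logb 2 (1 + κ * M * hF.1.eigenvalues i)
      ≤ (γ⁻¹ + Real.log (1 + κ * ((1 + α) * fplus) * M)
          + γ⁻¹ * (Real.log (1 + κ * ((1 + α) * fplus) * M)) ^ 2) / Real.log 2 := by
  have hlog2 : (0:ℝ) < Real.log 2 := Real.log_pos one_lt_two
  have hMpos : (0:ℝ) < M := by exact_mod_cast hM
  set c : ℝ := κ * M with hcdef
  have hc : 0 < c := by positivity
  set lam : Fin M → ℝ := hF.1.eigenvalues with hlamdef
  have hlam : ∀ i, 0 ≤ lam i := hF.eigenvalues_nonneg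
  set A : ℝ := κ * ((1 + α) * fplus) * M with hAdef
  have hA : 0 < A := by positivity
  -- reduce to log inequality
  have hlogb : ∑ i, Real.logb 2 (1 + c * lam i)
      = (∑ i, Real.log (1 + c * lam i)) / Real.log 2 := by
    rw [Finset.sum_div]
    rfl
  rw [hlogb]
  rw [div_le_div_iff_of_pos_right hlog2]
  -- positivity facts
  have hpos1 : ∀ i : Fin M, (0:ℝ) < 1 + c * lam i := fun i => by
    have := hlam i; nlinarith
  have hpos2 : ∀ i : Fin M, (0:ℝ) < 1 + c * (F i i).re := fun i => by
    have := hnonneg i; nlinarith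
  -- determinant and Hadamard
  have hGpsd := psd_one_add_smul hF hc.le
  have hdetid := det_one_add_smul_herm hF.1 c
  have hGdiag : ∀ i, (((1 : Matrix (Fin M) (Fin M) ℂ) + (c : ℂ) • F) i i).re
      = 1 + c * (F i i).re := by
    intro i
    simp [Matrix.add_apply, Matrix.one_apply_eq, Matrix.smul_apply, smul_eq_mul,
      Complex.add_re, Complex.one_re, Complex.re_ofReal_mul]
  have hHad := hadamard_psd hGpsd (fun i => by rw [hGdiag i]; exact hpos2 i)
  have hdet_re : (((1 : Matrix (Fin M) (Fin M) ℂ) + (c : ℂ) • F).det).re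
      = ∏ i, (1 + c * lam i) := by
    rw [hdetid, Complex.ofReal_re]
  have hprodle : ∏ i, (1 + c * lam i) ≤ ∏ i, (1 + c * (F i i).re) := by
    rw [← hdet_re]
    calc (((1 : Matrix (Fin M) (Fin M) ℂ) + (c : ℂ) • F).det).re
        ≤ ∏ i, ((((1 : Matrix (Fin M) (Fin M) ℂ) + (c : ℂ) • F)) i i).re := hHad
      _ = ∏ i, (1 + c * (F i i).re) := Finset.prod_congr rfl fun i _ => hGdiag i
  -- chain of inequalities
  have h1 : ∑ i, Real.log (1 + c * lam i) ≤ ∑ i, Real.log (1 + c * (F i i).re) := by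
    rw [← Real.log_prod (fun i _ => (hpos1 i).ne'),
      ← Real.log_prod (fun i _ => (hpos2 i).ne')]
    exact Real.log_le_log (Finset.prod_pos fun i _ => hpos1 i) hprodle
  have h2 : ∑ i, Real.log (1 + c * (F i i).re)
      ≤ ∑ i ∈ Finset.range M, Real.log (1 + A * Real.exp (-(γ * i))) := by
    rw [← Fin.sum_univ_eq_sum_range (fun i : ℕ => Real.log (1 + A * Real.exp (-(γ * i)))) M]
    refine Finset.sum_le_sum fun i _ => ?_
    apply Real.log_le_log (hpos2 i)
    have hexp : (0:ℝ) < Real.exp (-γ * (i:ℝ)) := Real.exp_pos _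
    have hfi : c * (F i i).re ≤ A * Real.exp (-(γ * (i:ℝ))) := by
      have h3 : c * (F i i).re ≤ c * (fplus * Real.exp (-γ * (i:ℝ))) :=
        mul_le_mul_of_nonneg_left (hA2 i) hc.le
      have h4 : c * (fplus * Real.exp (-γ * (i:ℝ))) ≤ A * Real.exp (-(γ * (i:ℝ))) := by
        rw [hcdef, hAdef, neg_mul]
        have hexp' : (0:ℝ) ≤ Real.exp (-(γ * (i:ℝ))) := (Real.exp_pos _).le
        nlinarith [mul_pos hκ hMpos, mul_nonneg (mul_nonneg hκ.le hMpos.le) hfplus.le,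
          mul_nonneg (mul_nonneg (mul_nonneg hκ.le hMpos.le) hfplus.le) hexp',
          mul_nonneg (mul_nonneg (mul_nonneg hα.le hκ.le) hMpos.le)
            (mul_nonneg hfplus.le hexp')]
      exact h3.trans h4
    linarith
  have h5 := sum_log_exp_decay_bound A γ hA hγ M
  linarith
end
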